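/- arXiv:1707.04528 — 5 statements merged into one kernel-verified Lean document; each statement's English description precedes it below -/
import Mathlib

section
/- If A is a real n×n matrix all of whose eigenvalues have absolute value strictly less than 1, then there exists a nonsingular real matrix T such that the largest singular value of T A T^{-1} is strictly less than 1. -/
open Matrix Finset

/-- Smallest real eigenvalue of a real square matrix (sInf of the set of real eigenvalues). -/
noncomputable def lamMin {n : ℕ} (M : Matrix (Fin n) (Fin n) ℝ) : ℝ :=
  sInf {x : ℝ | ∃ v : Fin n → ℝ, v ≠ 0 ∧ M *ᵥ v = x • v}

/-- Largest real eigenvalue of a real square matrix. -/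
noncomputable def lamMax {n : ℕ} (M : Matrix (Fin n) (Fin n) ℝ) : ℝ :=
  sSup {x : ℝ | ∃ v : Fin n → ℝ, v ≠ 0 ∧ M *ᵥ v = x • v}

/-- Largest singular value of a real square matrix. -/
noncomputable def sigMax {n : ℕ} (M : Matrix (Fin n) (Fin n) ℝ) : ℝ :=
  Real.sqrt (lamMax (Mᵀ * M))

/-- Smallest singular value of a real square matrix. -/
noncomputable def sigMin {n : ℕ} (M : Matrix (Fin n) (Fin n) ℝ) : ℝ :=
  Real.sqrt (lamMin (Mᵀ * M))

/-- `μ` is a (complex) eigenvalue of the real matrix `A`. -/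
def IsEigC {n : ℕ} (A : Matrix (Fin n) (Fin n) ℝ) (μ : ℂ) : Prop :=
  ∃ v : Fin n → ℂ, v ≠ 0 ∧ (A.map (fun a => (a : ℂ))) *ᵥ v = μ • v

/-- All complex eigenvalues have modulus `< 1`. -/
def SchurStable {n : ℕ} (A : Matrix (Fin n) (Fin n) ℝ) : Prop :=
  ∀ μ : ℂ, IsEigC A μ → ‖μ‖ < 1

section Aux

open Filter
open scoped ENNReal NNReal MatrixOrder

attribute [local instance] Matrix.linftyOpNormedRing Matrix.linftyOpNormedAlgebra

private lemma mem_spec_iff' {n : ℕ} (A : Matrix (Fin n) (Fin n) ℝ) (μ : ℂ) :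
    μ ∈ spectrum ℂ (A.map (fun a => (a : ℂ))) ↔ IsEigC A μ := by
  set Ac := A.map (fun a => (a : ℂ))
  rw [spectrum.mem_iff, Matrix.isUnit_iff_isUnit_det, isUnit_iff_ne_zero, not_not,
    ← Matrix.exists_mulVec_eq_zero_iff]
  constructor
  · rintro ⟨v, hv, hv2⟩
    refine ⟨v, hv, ?_⟩
    have : (algebraMap ℂ _ μ - Ac) *ᵥ v = μ • v - Ac *ᵥ v := by
      rw [Matrix.sub_mulVec]
      congr 1
      simp [Matrix.algebraMap_eq_diagonal]
      funext i; simp [Matrix.mulVec_diagonal]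
    rw [this] at hv2
    exact (sub_eq_zero.mp hv2).symm
  · rintro ⟨v, hv, hv2⟩
    refine ⟨v, hv, ?_⟩
    rw [Matrix.sub_mulVec]
    have : (algebraMap ℂ (Matrix (Fin n) (Fin n) ℂ) μ) *ᵥ v = μ • v := by
      simp [Matrix.algebraMap_eq_diagonal]
      funext i; simp [Matrix.mulVec_diagonal]
    rw [this, hv2, sub_self]

private lemma map_mulVec_ofReal' {n : ℕ} (B : Matrix (Fin n) (Fin n) ℝ) (w : Fin n → ℝ) :
    (B.map (fun a => (a : ℂ))) *ᵥ (fun i => (w i : ℂ)) = fun i => ((B *ᵥ w) i : ℂ) := by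
  funext i
  simp [Matrix.mulVec, dotProduct, Matrix.map_apply]

private lemma map_pow_ofReal' {n : ℕ} (B : Matrix (Fin n) (Fin n) ℝ) (k : ℕ) :
    (B ^ k).map (fun a => (a : ℂ)) = (B.map (fun a => (a : ℂ))) ^ k := by
  have := map_pow (Complex.ofRealHom.mapMatrix (m := Fin n)) B k
  exact this

private lemma entry_bound' {n : ℕ} (B : Matrix (Fin n) (Fin n) ℝ) (w : Fin n → ℝ) (i : Fin n) :
    |(B *ᵥ w) i| ≤ ‖B.map (fun a => (a : ℂ))‖ * ‖w‖ := by
  have h1 : |(B *ᵥ w) i| = ‖((B.map (fun a => (a : ℂ))) *ᵥ (fun j => (w j : ℂ))) i‖ := by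
    rw [map_mulVec_ofReal']; simp [Complex.norm_real]
  rw [h1]
  refine (norm_le_pi_norm _ i).trans ?_
  refine (Matrix.linfty_opNorm_mulVec _ _).trans ?_
  refine mul_le_mul_of_nonneg_left ?_ (norm_nonneg _)
  rw [pi_norm_le_iff_of_nonneg (norm_nonneg w)]
  intro j
  simpa [Complex.norm_real] using norm_le_pi_norm w j

private lemma norm_sq_le_dot' {n : ℕ} (w : Fin n → ℝ) : ‖w‖ ^ 2 ≤ w ⬝ᵥ w := by
  have h0 : (0:ℝ) ≤ w ⬝ᵥ w := by
    simp only [dotProduct]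
    exact Finset.sum_nonneg fun i _ => mul_self_nonneg _
  have h1 : ‖w‖ ≤ Real.sqrt (w ⬝ᵥ w) := by
    rw [pi_norm_le_iff_of_nonneg (Real.sqrt_nonneg _)]
    intro i
    rw [Real.norm_eq_abs, ← Real.sqrt_sq_eq_abs]
    apply Real.sqrt_le_sqrt
    simp only [dotProduct]
    rw [sq]
    exact Finset.single_le_sum (fun j _ => mul_self_nonneg (w j)) (mem_univ i)
  calc ‖w‖ ^ 2 ≤ Real.sqrt (w ⬝ᵥ w) ^ 2 := pow_le_pow_left₀ (norm_nonneg _) h1 2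
    _ = w ⬝ᵥ w := Real.sq_sqrt h0

private lemma dot_le_card_norm_sq' {n : ℕ} (z : Fin n → ℝ) (b : ℝ)
    (h : ∀ i, |z i| ≤ b) : z ⬝ᵥ z ≤ n * b ^ 2 := by
  simp only [dotProduct]
  calc (∑ i, z i * z i) ≤ ∑ _i : Fin n, b ^ 2 := by
        refine Finset.sum_le_sum fun i _ => ?_
        rw [← abs_mul_self (z i), abs_mul, ← sq]
        exact pow_le_pow_left₀ (abs_nonneg _) (h i) 2
    _ = n * b ^ 2 := by simp [mul_comm]

/-- Key contraction lemma: some power of `A` contracts the Euclidean quadratic form. -/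
private lemma contraction' {n : ℕ} (hn : 1 ≤ n) (A : Matrix (Fin n) (Fin n) ℝ)
    (h : SchurStable A) :
    ∃ (m : ℕ) (g : ℝ), 1 ≤ m ∧ 0 ≤ g ∧ g < 1 ∧
      ∀ w : Fin n → ℝ, ((A ^ m) *ᵥ w) ⬝ᵥ ((A ^ m) *ᵥ w) ≤ g * (w ⬝ᵥ w) := by
  haveI : Nonempty (Fin n) := ⟨⟨0, hn⟩⟩
  set Ac := A.map (fun a => (a : ℂ)) with hAc
  obtain ⟨μ, hμ, hμ2⟩ := spectrum.exists_nnnorm_eq_spectralRadius (a := Ac)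
  have hρ : spectralRadius ℂ Ac < 1 := by
    rw [← hμ2]
    have := h μ ((mem_spec_iff' A μ).mp hμ)
    exact_mod_cast (by exact_mod_cast this : (‖μ‖₊ : ℝ≥0) < 1)
  have hG := spectrum.pow_nnnorm_pow_one_div_tendsto_nhds_spectralRadius Ac
  have hev : ∀ᶠ M : ℕ in atTop, (‖Ac ^ M‖₊ : ℝ≥0∞) ^ (1 / M : ℝ) < 1 :=
    hG.eventually_lt_const hρ
  obtain ⟨M, hM1, hM2⟩ := (hev.and (eventually_ge_atTop 1)).exists
  have hc1 : ‖Ac ^ M‖ < 1 := by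
    have h5 : (‖Ac ^ M‖₊ : ℝ≥0∞) < 1 := by
      by_contra hc
      push_neg at hc
      have : (1 : ℝ≥0∞) ^ (1 / M : ℝ) ≤ (‖Ac ^ M‖₊ : ℝ≥0∞) ^ (1 / M : ℝ) :=
        ENNReal.rpow_le_rpow hc (by positivity)
      rw [ENNReal.one_rpow] at this
      exact absurd hM1 (not_lt.mpr this)
    have := ENNReal.coe_lt_coe.mp (by simpa using h5 : (‖Ac ^ M‖₊ : ℝ≥0∞) < (1 : ℝ≥0))
    exact_mod_cast this
  set c := ‖Ac ^ M‖ with hc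
  have hc0 : 0 ≤ c := norm_nonneg _
  obtain ⟨k, hk⟩ := exists_pow_lt_of_lt_one (show (0:ℝ) < 1 / (n + 1) by positivity) hc1
  set j := k + 1 with hj
  have hcj : c ^ (2 * j) < 1 / (n + 1) := by
    calc c ^ (2 * j) ≤ c ^ k := pow_le_pow_of_le_one hc0 hc1.le (by omega)
      _ < 1 / (n + 1) := hk
  set g : ℝ := n * c ^ (2 * j) with hg
  have hg0 : 0 ≤ g := by positivity
  have hg1 : g < 1 := by
    have hn' : (0:ℝ) < n + 1 := by positivity
    calc g < n * (1 / (n + 1)) := by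
          refine mul_lt_mul_of_pos_left hcj ?_
          exact_mod_cast Nat.pos_of_ne_zero (by omega)
      _ ≤ 1 := by
          rw [mul_one_div, div_le_one hn']
          linarith
  set m := M * j with hm
  refine ⟨m, g, Nat.one_le_iff_ne_zero.mpr (by positivity), hg0, hg1, fun w => ?_⟩
  have hnorm : ‖(A ^ m).map (fun a => (a : ℂ))‖ ≤ c ^ j := by
    rw [map_pow_ofReal', ← hAc, hm, pow_mul]
    exact norm_pow_le' _ (by omega)
  have hent : ∀ i, |((A ^ m) *ᵥ w) i| ≤ c ^ j * ‖w‖ := fun i =>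
    (entry_bound' (A ^ m) w i).trans
      (mul_le_mul_of_nonneg_right hnorm (norm_nonneg w))
  calc ((A ^ m) *ᵥ w) ⬝ᵥ ((A ^ m) *ᵥ w) ≤ n * (c ^ j * ‖w‖) ^ 2 :=
        dot_le_card_norm_sq' _ _ hent
    _ = g * ‖w‖ ^ 2 := by rw [hg, mul_pow, ← pow_mul, Nat.mul_comm j 2]; ring
    _ ≤ g * (w ⬝ᵥ w) := mul_le_mul_of_nonneg_left (norm_sq_le_dot' w) hg0

private lemma sum_mulVec'' {n : ℕ} {s : Finset ℕ} (f : ℕ → Matrix (Fin n) (Fin n) ℝ)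
    (u : Fin n → ℝ) : (∑ k ∈ s, f k) *ᵥ u = ∑ k ∈ s, (f k) *ᵥ u := by
  funext i
  simp only [Matrix.mulVec, dotProduct, Finset.sum_apply, Matrix.sum_apply,
    Finset.sum_mul]
  exact Finset.sum_comm

private lemma dot_sum'' {n : ℕ} {s : Finset ℕ} (v : Fin n → ℝ) (z : ℕ → Fin n → ℝ) :
    v ⬝ᵥ (∑ k ∈ s, z k) = ∑ k ∈ s, v ⬝ᵥ z k := by
  simp only [dotProduct, Finset.sum_apply, Finset.mul_sum]
  exact Finset.sum_comm

private lemma dot_self_pos' {n : ℕ} {v : Fin n → ℝ} (hv : v ≠ 0) : 0 < v ⬝ᵥ v := by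
  rcases lt_or_eq_of_le (Finset.sum_nonneg fun i _ => mul_self_nonneg (v i) :
      (0:ℝ) ≤ v ⬝ᵥ v) with h | h
  · exact h
  · exact absurd (dotProduct_self_eq_zero.mp h.symm) hv

theorem stmt3 {n : ℕ} (A : Matrix (Fin n) (Fin n) ℝ) (h : SchurStable A) :
    ∃ T : Matrix (Fin n) (Fin n) ℝ, IsUnit T.det ∧ sigMax (T * A * T⁻¹) < 1 := by
  rcases Nat.eq_zero_or_pos n with hn0 | hn
  · subst hn0
    refine ⟨1, by simp, ?_⟩
    have hempty : {x : ℝ | ∃ v : Fin 0 → ℝ, v ≠ 0 ∧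
        ((1 * A * 1⁻¹)ᵀ * (1 * A * 1⁻¹)) *ᵥ v = x • v} = ∅ := by
      ext x
      simp only [Set.mem_setOf_eq, Set.mem_empty_iff_false, iff_false, not_exists]
      rintro v ⟨hv, -⟩
      exact hv (Subsingleton.elim v 0)
    rw [sigMax, lamMax, hempty, Real.sSup_empty, Real.sqrt_zero]
    norm_num
  · obtain ⟨m, g, hm1, hg0, hg1, hcontr⟩ := contraction' hn A h
    set P : Matrix (Fin n) (Fin n) ℝ := ∑ k ∈ Finset.range m, (A ^ k)ᵀ * (A ^ k) with hP
    have hQ : ∀ u : Fin n → ℝ, u ⬝ᵥ (P *ᵥ u)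
        = ∑ k ∈ Finset.range m, ((A ^ k) *ᵥ u) ⬝ᵥ ((A ^ k) *ᵥ u) := by
      intro u
      rw [hP, sum_mulVec'', dot_sum'']
      refine Finset.sum_congr rfl fun k _ => ?_
      rw [← Matrix.mulVec_mulVec, Matrix.dotProduct_mulVec u (A ^ k)ᵀ,
        Matrix.vecMul_transpose]
    have hQnonneg : ∀ u : Fin n → ℝ, 0 ≤ u ⬝ᵥ (P *ᵥ u) := by
      intro u
      rw [hQ]
      exact Finset.sum_nonneg fun k _ => Finset.sum_nonneg fun i _ => mul_self_nonneg _
    have hQpos : ∀ u : Fin n → ℝ, u ≠ 0 → 0 < u ⬝ᵥ (P *ᵥ u) := by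
      intro u hu
      rw [hQ]
      have h0m : 0 ∈ Finset.range m := Finset.mem_range.mpr (by omega)
      refine lt_of_lt_of_le (dot_self_pos' hu) ?_
      have := Finset.single_le_sum
        (f := fun k => ((A ^ k) *ᵥ u) ⬝ᵥ ((A ^ k) *ᵥ u))
        (fun k _ => Finset.sum_nonneg fun i _ => mul_self_nonneg _) h0m
      simpa [Matrix.one_mulVec] using this
    have hPsym : Pᵀ = P := by
      rw [hP, Matrix.transpose_sum]
      refine Finset.sum_congr rfl fun k _ => ?_
      rw [Matrix.transpose_mul, Matrix.transpose_transpose]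
    have hPpos : P.PosDef := by
      refine Matrix.posDef_iff_dotProduct_mulVec.mpr ⟨?_, fun x hx => ?_⟩
      · rw [Matrix.IsHermitian, Matrix.conjTranspose_eq_transpose_of_trivial, hPsym]
      · simpa using hQpos x hx
    have hPsd : P.PosSemidef := hPpos.posSemidef
    set T : Matrix (Fin n) (Fin n) ℝ := CFC.sqrt P with hT
    have hTsym : Tᵀ = T := by
      have h9 : Tᴴ = T := (CFC.sqrt_nonneg P).posSemidef.1
      rwa [Matrix.conjTranspose_eq_transpose_of_trivial] at h9
    have hTT : T * T = P := CFC.sqrt_mul_sqrt_self P hPsd.nonneg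
    have hdet : IsUnit T.det := by
      rw [isUnit_iff_ne_zero]
      intro hd
      have : P.det = 0 := by rw [← hTT, Matrix.det_mul, hd, mul_zero]
      exact absurd this hPpos.det_pos.ne'
    refine ⟨T, hdet, ?_⟩
    -- constants
    set S : ℝ := ∑ k ∈ Finset.range m, (n : ℝ) * ‖(A ^ k).map (fun a => (a : ℂ))‖ ^ 2
      with hS
    set C : ℝ := max 1 S with hC
    have hC1 : (1:ℝ) ≤ C := le_max_left _ _
    have hC0 : (0:ℝ) < C := lt_of_lt_of_le one_pos hC1
    have hQC : ∀ u : Fin n → ℝ, u ⬝ᵥ (P *ᵥ u) ≤ C * (u ⬝ᵥ u) := by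
      intro u
      rw [hQ]
      calc (∑ k ∈ Finset.range m, ((A ^ k) *ᵥ u) ⬝ᵥ ((A ^ k) *ᵥ u))
          ≤ ∑ k ∈ Finset.range m,
            (n : ℝ) * (‖(A ^ k).map (fun a => (a : ℂ))‖ * ‖u‖) ^ 2 :=
            Finset.sum_le_sum fun k _ =>
              dot_le_card_norm_sq' _ _ (fun i => entry_bound' (A ^ k) u i)
        _ = S * ‖u‖ ^ 2 := by
            rw [hS, Finset.sum_mul]
            exact Finset.sum_congr rfl fun k _ => by ring
        _ ≤ C * ‖u‖ ^ 2 := by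
            refine mul_le_mul_of_nonneg_right (le_max_right _ _) (by positivity)
        _ ≤ C * (u ⬝ᵥ u) := mul_le_mul_of_nonneg_left (norm_sq_le_dot' u) hC0.le
    set th : ℝ := 1 - (1 - g) / C with hth
    have h1g : (0:ℝ) ≤ 1 - g := by linarith
    have hth0 : 0 ≤ th := by
      have : (1 - g) / C ≤ 1 - g := div_le_self h1g hC1
      rw [hth]; linarith
    have hth1 : th < 1 := by
      have : 0 < (1 - g) / C := div_pos (by linarith) hC0
      rw [hth]; linarith
    have hkey : ∀ u : Fin n → ℝ,
        (A *ᵥ u) ⬝ᵥ (P *ᵥ (A *ᵥ u)) ≤ th * (u ⬝ᵥ (P *ᵥ u)) := by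
      intro u
      have hshift : ∀ k : ℕ, (A ^ k) *ᵥ (A *ᵥ u) = (A ^ (k + 1)) *ᵥ u := fun k => by
        rw [Matrix.mulVec_mulVec, ← pow_succ]
      have e1 : (A *ᵥ u) ⬝ᵥ (P *ᵥ (A *ᵥ u))
          = ∑ k ∈ Finset.range m, ((A ^ (k+1)) *ᵥ u) ⬝ᵥ ((A ^ (k+1)) *ᵥ u) := by
        rw [hQ]
        exact Finset.sum_congr rfl fun k _ => by rw [hshift]
      have e2 : ∑ k ∈ Finset.range m, ((A ^ (k+1)) *ᵥ u) ⬝ᵥ ((A ^ (k+1)) *ᵥ u)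
          = (u ⬝ᵥ (P *ᵥ u)) + ((A ^ m) *ᵥ u) ⬝ᵥ ((A ^ m) *ᵥ u) - u ⬝ᵥ u := by
        have t1 := Finset.sum_range_succ'
          (fun k => ((A ^ k) *ᵥ u) ⬝ᵥ ((A ^ k) *ᵥ u)) m
        have t2 := Finset.sum_range_succ
          (fun k => ((A ^ k) *ᵥ u) ⬝ᵥ ((A ^ k) *ᵥ u)) m
        rw [hQ]
        simp only [pow_zero, Matrix.one_mulVec] at t1
        linarith [t1, t2]
      have hEm := hcontr u
      have hQCu := hQC u
      have h6 : (1 - g) / C * (u ⬝ᵥ (P *ᵥ u)) ≤ (1 - g) * (u ⬝ᵥ u) := by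
        calc (1 - g) / C * (u ⬝ᵥ (P *ᵥ u)) ≤ (1 - g) / C * (C * (u ⬝ᵥ u)) :=
              mul_le_mul_of_nonneg_left hQCu (div_nonneg h1g hC0.le)
          _ = (1 - g) * (u ⬝ᵥ u) := by field_simp
      rw [e1, e2, hth]
      have h7 : (1 - (1 - g) / C) * (u ⬝ᵥ (P *ᵥ u))
          = u ⬝ᵥ (P *ᵥ u) - (1 - g) / C * (u ⬝ᵥ (P *ᵥ u)) := by ring
      have h8 : (1 - g) * (u ⬝ᵥ u) = u ⬝ᵥ u - g * (u ⬝ᵥ u) := by ring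
      linarith
    -- final step
    refine lt_of_le_of_lt ?_ (show Real.sqrt th < 1 from ?_)
    · unfold sigMax lamMax
      apply Real.sqrt_le_sqrt
      refine Real.sSup_le ?_ hth0
      rintro x ⟨v, hv, heq⟩
      set Mx := T * A * T⁻¹ with hMx
      have hTinv : T * T⁻¹ = 1 := Matrix.mul_nonsing_inv T hdet
      set u : Fin n → ℝ := T⁻¹ *ᵥ v with hu
      have hvTu : T *ᵥ u = v := by
        rw [hu, Matrix.mulVec_mulVec, hTinv, Matrix.one_mulVec]
      have hTw : ∀ w : Fin n → ℝ, (T *ᵥ w) ⬝ᵥ (T *ᵥ w) = w ⬝ᵥ (P *ᵥ w) := by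
        intro w
        rw [Matrix.dotProduct_mulVec]
        nth_rewrite 2 [← hTsym]
        rw [Matrix.vecMul_transpose, Matrix.mulVec_mulVec, hTT, dotProduct_comm]
      have hMv : Mx *ᵥ v = T *ᵥ (A *ᵥ u) := by
        rw [hMx, ← Matrix.mulVec_mulVec, ← Matrix.mulVec_mulVec, ← hu]
      have heig : x * (v ⬝ᵥ v) = (Mx *ᵥ v) ⬝ᵥ (Mx *ᵥ v) := by
        have h8 : v ⬝ᵥ ((Mxᵀ * Mx) *ᵥ v) = (Mx *ᵥ v) ⬝ᵥ (Mx *ᵥ v) := by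
          rw [← Matrix.mulVec_mulVec, Matrix.dotProduct_mulVec, Matrix.vecMul_transpose]
        rw [← h8, heq]
        simp [dotProduct_smul, smul_eq_mul]
      have hvv : 0 < v ⬝ᵥ v := dot_self_pos' hv
      have hchain : x * (v ⬝ᵥ v) ≤ th * (v ⬝ᵥ v) := by
        calc x * (v ⬝ᵥ v) = (Mx *ᵥ v) ⬝ᵥ (Mx *ᵥ v) := heig
          _ = (A *ᵥ u) ⬝ᵥ (P *ᵥ (A *ᵥ u)) := by rw [hMv, hTw]
          _ ≤ th * (u ⬝ᵥ (P *ᵥ u)) := hkey u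
          _ = th * (v ⬝ᵥ v) := by rw [← hTw, hvTu]
      exact le_of_mul_le_mul_right hchain hvv
    · rw [Real.sqrt_lt' one_pos, one_pow]
      exact hth1

end Aux
end

section
/- Let A be a real n×n matrix, T a nonsingular matrix with σ_1(T A T^{-1}) < 1, and Q a positive definite matrix. If P is a positive semidefinite solution of the Lyapunov equation P = AᵀPA + Q, then tr(P) ≤ (σ_1(T)²/σ_n(T)²) · tr(Q)/(1 − σ_1(T A T^{-1})²). -/
open Matrix Finset

lemma herm_transpose_eq {n : ℕ} {S : Matrix (Fin n) (Fin n) ℝ} (hS : S.IsHermitian) :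
    Sᵀ = S := by
  have := hS.eq
  simpa using this

lemma symm_dp {n : ℕ} {S : Matrix (Fin n) (Fin n) ℝ} (hS : S.IsHermitian)
    (u v : Fin n → ℝ) : u ⬝ᵥ (S *ᵥ v) = (S *ᵥ u) ⬝ᵥ v := by
  rw [dotProduct_mulVec, ← mulVec_transpose, herm_transpose_eq hS]

lemma euc_dp {n : ℕ} (x y : EuclideanSpace ℝ (Fin n)) :
    (inner ℝ x y : ℝ) = (WithLp.equiv 2 (Fin n → ℝ) x) ⬝ᵥ (WithLp.equiv 2 (Fin n → ℝ) y) := by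
  simp [PiLp.inner_apply, dotProduct, mul_comm]

lemma spec_eq {n : ℕ} {S : Matrix (Fin n) (Fin n) ℝ} (hS : S.IsHermitian) :
    {x : ℝ | ∃ v : Fin n → ℝ, v ≠ 0 ∧ S *ᵥ v = x • v} = Set.range hS.eigenvalues := by
  ext x
  constructor
  · rintro ⟨v, hv, hSv⟩
    by_contra hx
    apply hv
    have key : ∀ i, (WithLp.equiv 2 (Fin n → ℝ)) (hS.eigenvectorBasis i) ⬝ᵥ v = 0 := by
      intro i
      have h1 : (WithLp.equiv 2 (Fin n → ℝ)) (hS.eigenvectorBasis i) ⬝ᵥ (S *ᵥ v) =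
          x * ((WithLp.equiv 2 (Fin n → ℝ)) (hS.eigenvectorBasis i) ⬝ᵥ v) := by
        rw [hSv, dotProduct_smul, smul_eq_mul]
      have h2 : (WithLp.equiv 2 (Fin n → ℝ)) (hS.eigenvectorBasis i) ⬝ᵥ (S *ᵥ v) =
          hS.eigenvalues i * ((WithLp.equiv 2 (Fin n → ℝ)) (hS.eigenvectorBasis i) ⬝ᵥ v) := by
        rw [symm_dp hS, show S *ᵥ (WithLp.equiv 2 (Fin n → ℝ)) (hS.eigenvectorBasis i) = hS.eigenvalues i • (WithLp.equiv 2 (Fin n → ℝ)) (hS.eigenvectorBasis i) from hS.mulVec_eigenvectorBasis i, smul_dotProduct, smul_eq_mul]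
      by_contra hne
      have hx' : hS.eigenvalues i = x := by
        have h3 := h1.symm.trans h2
        rcases mul_eq_mul_right_iff.mp h3.symm with h | h
        · exact h
        · exact absurd h hne
      exact hx ⟨i, hx'⟩
    have hv0 : (WithLp.toLp 2 v : EuclideanSpace ℝ (Fin n)) = 0 := by
      rw [← (hS.eigenvectorBasis).sum_repr' (WithLp.toLp 2 v : EuclideanSpace ℝ (Fin n))]
      apply Finset.sum_eq_zero
      intro i _
      rw [euc_dp, show (WithLp.equiv 2 (Fin n → ℝ)) (WithLp.toLp 2 v : EuclideanSpace ℝ (Fin n)) = v from rfl, key i, zero_smul]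
    exact congrArg WithLp.ofLp hv0
  · rintro ⟨i, rfl⟩
    exact ⟨(WithLp.equiv 2 (Fin n → ℝ)) (hS.eigenvectorBasis i), by
      have := hS.eigenvectorBasis.orthonormal.ne_zero i
      exact fun h => this (by ext j; exact congrFun h j), hS.mulVec_eigenvectorBasis i⟩

lemma eig_le_lamMax {n : ℕ} {S : Matrix (Fin n) (Fin n) ℝ} (hS : S.IsHermitian) (i : Fin n) :
    hS.eigenvalues i ≤ lamMax S := by
  simp only [lamMax, spec_eq hS]
  exact le_csSup (Set.finite_range _).bddAbove ⟨i, rfl⟩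

lemma lamMin_le_eig {n : ℕ} {S : Matrix (Fin n) (Fin n) ℝ} (hS : S.IsHermitian) (i : Fin n) :
    lamMin S ≤ hS.eigenvalues i := by
  simp only [lamMin, spec_eq hS]
  exact csInf_le (Set.finite_range _).bddBelow ⟨i, rfl⟩

lemma lamMax_mem {n : ℕ} {S : Matrix (Fin n) (Fin n) ℝ} (hS : S.IsHermitian) (hn : 0 < n) :
    ∃ v : Fin n → ℝ, v ≠ 0 ∧ S *ᵥ v = lamMax S • v := by
  haveI : Nonempty (Fin n) := Fin.pos_iff_nonempty.mp hn
  have : lamMax S ∈ {x : ℝ | ∃ v : Fin n → ℝ, v ≠ 0 ∧ S *ᵥ v = x • v} := by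
    simp only [lamMax, spec_eq hS]
    exact Set.Nonempty.csSup_mem (Set.range_nonempty _) (Set.finite_range _)
  exact this

lemma lamMin_mem {n : ℕ} {S : Matrix (Fin n) (Fin n) ℝ} (hS : S.IsHermitian) (hn : 0 < n) :
    ∃ v : Fin n → ℝ, v ≠ 0 ∧ S *ᵥ v = lamMin S • v := by
  haveI : Nonempty (Fin n) := Fin.pos_iff_nonempty.mp hn
  have : lamMin S ∈ {x : ℝ | ∃ v : Fin n → ℝ, v ≠ 0 ∧ S *ᵥ v = x • v} := by
    simp only [lamMin, spec_eq hS]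
    exact Set.Nonempty.csInf_mem (Set.range_nonempty _) (Set.finite_range _)
  exact this

lemma rayleigh_decomp {n : ℕ} {S : Matrix (Fin n) (Fin n) ℝ} (hS : S.IsHermitian)
    (x y : Fin n → ℝ) :
    x ⬝ᵥ y = ∑ i, ((WithLp.equiv 2 (Fin n → ℝ)) (hS.eigenvectorBasis i) ⬝ᵥ x) *
      ((WithLp.equiv 2 (Fin n → ℝ)) (hS.eigenvectorBasis i) ⬝ᵥ y) := by
  have base := (hS.eigenvectorBasis).sum_inner_mul_inner
    (WithLp.toLp 2 x : EuclideanSpace ℝ (Fin n)) (WithLp.toLp 2 y : EuclideanSpace ℝ (Fin n))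
  simp only [euc_dp] at base
  rw [show (WithLp.equiv 2 (Fin n → ℝ)) (WithLp.toLp 2 x : EuclideanSpace ℝ (Fin n)) = x from rfl,
    show (WithLp.equiv 2 (Fin n → ℝ)) (WithLp.toLp 2 y : EuclideanSpace ℝ (Fin n)) = y from rfl] at base
  rw [← base]
  congr 1
  funext i
  rw [dotProduct_comm]

lemma rayleigh_max {n : ℕ} {S : Matrix (Fin n) (Fin n) ℝ} (hS : S.IsHermitian)
    (x : Fin n → ℝ) : x ⬝ᵥ (S *ᵥ x) ≤ lamMax S * (x ⬝ᵥ x) := by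
  rw [rayleigh_decomp hS x (S *ᵥ x), rayleigh_decomp hS x x, Finset.mul_sum]
  apply Finset.sum_le_sum
  intro i _
  rw [symm_dp hS, show S *ᵥ (WithLp.equiv 2 (Fin n → ℝ)) (hS.eigenvectorBasis i) = hS.eigenvalues i • (WithLp.equiv 2 (Fin n → ℝ)) (hS.eigenvectorBasis i) from hS.mulVec_eigenvectorBasis i, smul_dotProduct, smul_eq_mul]
  have h := eig_le_lamMax hS i
  nlinarith [sq_nonneg ((WithLp.equiv 2 (Fin n → ℝ)) (hS.eigenvectorBasis i) ⬝ᵥ x)]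

lemma rayleigh_min {n : ℕ} {S : Matrix (Fin n) (Fin n) ℝ} (hS : S.IsHermitian)
    (x : Fin n → ℝ) : lamMin S * (x ⬝ᵥ x) ≤ x ⬝ᵥ (S *ᵥ x) := by
  rw [rayleigh_decomp hS x (S *ᵥ x), rayleigh_decomp hS x x, Finset.mul_sum]
  apply Finset.sum_le_sum
  intro i _
  rw [symm_dp hS, show S *ᵥ (WithLp.equiv 2 (Fin n → ℝ)) (hS.eigenvectorBasis i) = hS.eigenvalues i • (WithLp.equiv 2 (Fin n → ℝ)) (hS.eigenvectorBasis i) from hS.mulVec_eigenvectorBasis i, smul_dotProduct, smul_eq_mul]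
  have h := lamMin_le_eig hS i
  nlinarith [sq_nonneg ((WithLp.equiv 2 (Fin n → ℝ)) (hS.eigenvectorBasis i) ⬝ᵥ x)]

lemma herm_tm {n : ℕ} (C : Matrix (Fin n) (Fin n) ℝ) : (Cᵀ * C).IsHermitian := by
  have := isHermitian_conjTranspose_mul_self C
  rwa [conjTranspose_eq_transpose_of_trivial] at this

lemma dp_self_nonneg {n : ℕ} (x : Fin n → ℝ) : 0 ≤ x ⬝ᵥ x :=
  Finset.sum_nonneg fun i _ => mul_self_nonneg _

lemma dp_self_pos {n : ℕ} {x : Fin n → ℝ} (hx : x ≠ 0) : 0 < x ⬝ᵥ x :=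
  lt_of_le_of_ne (dp_self_nonneg x) (fun h => hx (dotProduct_self_eq_zero.mp h.symm))

lemma dp_mul_self {n : ℕ} (C : Matrix (Fin n) (Fin n) ℝ) (x : Fin n → ℝ) :
    x ⬝ᵥ ((Cᵀ * C) *ᵥ x) = (C *ᵥ x) ⬝ᵥ (C *ᵥ x) := by
  rw [← mulVec_mulVec, dotProduct_mulVec, vecMul_transpose]

lemma dp_mul_self' {n : ℕ} (C : Matrix (Fin n) (Fin n) ℝ) (x : Fin n → ℝ) :
    x ⬝ᵥ ((C * Cᵀ) *ᵥ x) = (Cᵀ *ᵥ x) ⬝ᵥ (Cᵀ *ᵥ x) := by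
  have := dp_mul_self Cᵀ x
  rwa [transpose_transpose] at this

lemma lamMax_tm_nonneg {n : ℕ} (C : Matrix (Fin n) (Fin n) ℝ) (hn : 0 < n) :
    0 ≤ lamMax (Cᵀ * C) := by
  obtain ⟨v, hv, hev⟩ := lamMax_mem (herm_tm C) hn
  have h1 : v ⬝ᵥ ((Cᵀ * C) *ᵥ v) = lamMax (Cᵀ * C) * (v ⬝ᵥ v) := by
    rw [hev, dotProduct_smul, smul_eq_mul]
  have h2 := dp_mul_self C v
  have h3 := dp_self_nonneg (C *ᵥ v)
  have h4 := dp_self_pos hv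
  nlinarith

lemma herm_tm' {n : ℕ} (C : Matrix (Fin n) (Fin n) ℝ) : (C * Cᵀ).IsHermitian := by
  have := herm_tm Cᵀ
  rwa [transpose_transpose] at this

lemma lamMax_comm_le {n : ℕ} (C : Matrix (Fin n) (Fin n) ℝ) (hn : 0 < n) :
    lamMax (Cᵀ * C) ≤ lamMax (C * Cᵀ) := by
  obtain ⟨v, hv, hev⟩ := lamMax_mem (herm_tm C) hn
  set l := lamMax (Cᵀ * C) with hl
  have hCCt : 0 ≤ lamMax (C * Cᵀ) := by
    have := lamMax_tm_nonneg Cᵀ hn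
    rwa [transpose_transpose] at this
  by_cases hl0 : l ≤ 0
  · linarith
  push_neg at hl0
  have hw : C *ᵥ v ≠ 0 := by
    intro h
    have : (Cᵀ * C) *ᵥ v = 0 := by rw [← mulVec_mulVec, h, mulVec_zero]
    rw [hev] at this
    rcases smul_eq_zero.mp this with h' | h'
    · exact absurd h' (ne_of_gt hl0)
    · exact hv h'
  have hmem : l ∈ {x : ℝ | ∃ v : Fin n → ℝ, v ≠ 0 ∧ (C * Cᵀ) *ᵥ v = x • v} := by
    refine ⟨C *ᵥ v, hw, ?_⟩
    rw [mulVec_mulVec, show C * Cᵀ * C = C * (Cᵀ * C) from by rw [Matrix.mul_assoc],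
      ← mulVec_mulVec, hev, mulVec_smul]
  simp only [lamMax, spec_eq (herm_tm' C)] at hmem ⊢
  exact le_csSup (Set.finite_range _).bddAbove hmem

lemma mulVec_ne {n : ℕ} {C : Matrix (Fin n) (Fin n) ℝ} (hC : IsUnit C.det)
    {w : Fin n → ℝ} (hw : w ≠ 0) : C *ᵥ w ≠ 0 := by
  intro h
  apply hw
  have := congrArg (fun u => C⁻¹ *ᵥ u) h
  simpa [mulVec_mulVec, Matrix.nonsing_inv_mul _ hC] using this

lemma lamMin_tm_pos {n : ℕ} {C : Matrix (Fin n) (Fin n) ℝ} (hC : IsUnit C.det) (hn : 0 < n) :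
    0 < lamMin (Cᵀ * C) := by
  obtain ⟨v, hv, hev⟩ := lamMin_mem (herm_tm C) hn
  have h1 : v ⬝ᵥ ((Cᵀ * C) *ᵥ v) = lamMin (Cᵀ * C) * (v ⬝ᵥ v) := by
    rw [hev, dotProduct_smul, smul_eq_mul]
  have h2 := dp_mul_self C v
  have h3 := dp_self_pos (mulVec_ne hC hv)
  have h4 := dp_self_pos hv
  nlinarith

lemma lamMin_comm_le {n : ℕ} {C : Matrix (Fin n) (Fin n) ℝ} (hC : IsUnit C.det) (hn : 0 < n) :
    lamMin (Cᵀ * C) ≤ lamMin (C * Cᵀ) := by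
  obtain ⟨w, hw, hew⟩ := lamMin_mem (herm_tm' C) hn
  have hCt : IsUnit Cᵀ.det := by rwa [Matrix.det_transpose]
  have hv : Cᵀ *ᵥ w ≠ 0 := mulVec_ne hCt hw
  have hmem : lamMin (C * Cᵀ) ∈ {x : ℝ | ∃ v : Fin n → ℝ, v ≠ 0 ∧ (Cᵀ * C) *ᵥ v = x • v} := by
    refine ⟨Cᵀ *ᵥ w, hv, ?_⟩
    rw [mulVec_mulVec, show Cᵀ * C * Cᵀ = Cᵀ * (C * Cᵀ) from by rw [Matrix.mul_assoc],
      ← mulVec_mulVec, hew, mulVec_smul]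
  simp only [spec_eq (herm_tm C)] at hmem
  simp only [lamMin, spec_eq (herm_tm C)]
  exact csInf_le (Set.finite_range _).bddBelow hmem

lemma sig_sq_max {n : ℕ} (C : Matrix (Fin n) (Fin n) ℝ) (hn : 0 < n) :
    sigMax C ^ 2 = lamMax (Cᵀ * C) := Real.sq_sqrt (lamMax_tm_nonneg C hn)

lemma sig_sq_min {n : ℕ} {C : Matrix (Fin n) (Fin n) ℝ} (hC : IsUnit C.det) (hn : 0 < n) :
    sigMin C ^ 2 = lamMin (Cᵀ * C) := Real.sq_sqrt (lamMin_tm_pos hC hn).le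

lemma sigMin_pos {n : ℕ} {C : Matrix (Fin n) (Fin n) ℝ} (hC : IsUnit C.det) (hn : 0 < n) :
    0 < sigMin C := Real.sqrt_pos.mpr (lamMin_tm_pos hC hn)

lemma opUB {n : ℕ} (C : Matrix (Fin n) (Fin n) ℝ) (hn : 0 < n) (x : Fin n → ℝ) :
    (C *ᵥ x) ⬝ᵥ (C *ᵥ x) ≤ sigMax C ^ 2 * (x ⬝ᵥ x) := by
  rw [sig_sq_max C hn, ← dp_mul_self]
  exact rayleigh_max (herm_tm C) x

lemma opUBT {n : ℕ} (C : Matrix (Fin n) (Fin n) ℝ) (hn : 0 < n) (x : Fin n → ℝ) :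
    (Cᵀ *ᵥ x) ⬝ᵥ (Cᵀ *ᵥ x) ≤ sigMax C ^ 2 * (x ⬝ᵥ x) := by
  rw [← dp_mul_self', sig_sq_max C hn]
  refine (rayleigh_max (herm_tm' C) x).trans ?_
  have h := lamMax_comm_le Cᵀ hn
  rw [transpose_transpose] at h
  exact mul_le_mul_of_nonneg_right h (dp_self_nonneg x)

lemma opLBT {n : ℕ} {C : Matrix (Fin n) (Fin n) ℝ} (hC : IsUnit C.det) (hn : 0 < n)
    (x : Fin n → ℝ) :
    sigMin C ^ 2 * (x ⬝ᵥ x) ≤ (Cᵀ *ᵥ x) ⬝ᵥ (Cᵀ *ᵥ x) := by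
  rw [← dp_mul_self', sig_sq_min hC hn]
  refine le_trans ?_ (rayleigh_min (herm_tm' C) x)
  exact mul_le_mul_of_nonneg_right (lamMin_comm_le hC hn) (dp_self_nonneg x)

open scoped MatrixOrder in
lemma traceLe {n : ℕ} {M : Matrix (Fin n) (Fin n) ℝ} (hM : M.PosSemidef)
    (C : Matrix (Fin n) (Fin n) ℝ) {c : ℝ}
    (h : ∀ x : Fin n → ℝ, (Cᵀ *ᵥ x) ⬝ᵥ (Cᵀ *ᵥ x) ≤ c * (x ⬝ᵥ x)) :
    (Cᵀ * M * C).trace ≤ c * M.trace := by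
  have hRR : CFC.sqrt M * CFC.sqrt M = M := CFC.sqrt_mul_sqrt_self M hM.nonneg
  set R := CFC.sqrt M with hRdef
  have hRt : Rᵀ = R := herm_transpose_eq (CFC.sqrt_nonneg M).posSemidef.1
  have hsym : ∀ a b, R a b = R b a := fun a b => by
    have h' := congrFun (congrFun hRt b) a
    rw [transpose_apply] at h'
    exact h'
  have key : Cᵀ * M * C = (Cᵀ * R) * (Cᵀ * R)ᵀ := by
    rw [transpose_mul, hRt, transpose_transpose, ← hRR]
    simp only [Matrix.mul_assoc]
  rw [key, Matrix.trace_mul_comm]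
  have col : ∀ j k, (Cᵀ * R) k j = (Cᵀ *ᵥ (fun l => R l j)) k := by
    intro j k; simp [Matrix.mul_apply, Matrix.mulVec, dotProduct]
  have tr1 : ((Cᵀ * R)ᵀ * (Cᵀ * R)).trace =
      ∑ j, (Cᵀ *ᵥ (fun l => R l j)) ⬝ᵥ (Cᵀ *ᵥ (fun l => R l j)) := by
    simp only [Matrix.trace, Matrix.diag]
    apply Finset.sum_congr rfl
    intro j _
    rw [Matrix.mul_apply, dotProduct]
    apply Finset.sum_congr rfl
    intro k _
    rw [transpose_apply, col j k]
  rw [tr1]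
  have tr2 : ∀ j, (fun l => R l j) ⬝ᵥ (fun l => R l j) = M j j := by
    intro j
    rw [← hRR]
    simp only [Matrix.mul_apply, dotProduct]
    apply Finset.sum_congr rfl
    intro l _
    rw [hsym l j]
  calc ∑ j, (Cᵀ *ᵥ (fun l => R l j)) ⬝ᵥ (Cᵀ *ᵥ (fun l => R l j))
      ≤ ∑ j, c * ((fun l => R l j) ⬝ᵥ (fun l => R l j)) :=
        Finset.sum_le_sum fun j _ => h _
    _ = c * M.trace := by
        rw [← Finset.mul_sum]
        congr 1
        simp only [Matrix.trace, Matrix.diag]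
        exact Finset.sum_congr rfl fun j _ => tr2 j

lemma psd_trace_nonneg {n : ℕ} {M : Matrix (Fin n) (Fin n) ℝ} (hM : M.PosSemidef) :
    0 ≤ M.trace := by
  rw [Matrix.trace]
  apply Finset.sum_nonneg
  intro i _
  exact hM.diag_nonneg

theorem stmt4 {n : ℕ} (A T P Q : Matrix (Fin n) (Fin n) ℝ)
    (hT : IsUnit T.det) (hTA : sigMax (T * A * T⁻¹) < 1)
    (hQ : Q.PosDef) (hP : P.PosSemidef) (heq : P = Aᵀ * P * A + Q) :
    P.trace ≤ (sigMax T ^ 2 / sigMin T ^ 2) * (Q.trace / (1 - sigMax (T * A * T⁻¹) ^ 2)) := by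
  rcases Nat.eq_zero_or_pos n with hn | hn
  · subst hn
    simp [Matrix.trace]
  set B := T * A * T⁻¹ with hB
  set s := sigMax B with hsdef
  set κ := sigMax T ^ 2 / sigMin T ^ 2 with hκ
  have hs0 : 0 ≤ s := Real.sqrt_nonneg _
  have hs2 : s ^ 2 < 1 := by nlinarith
  have hs2n : (0:ℝ) ≤ s ^ 2 := sq_nonneg _
  have h1s : 0 < 1 - s ^ 2 := by linarith
  have hTt : IsUnit Tᵀ.det := by rwa [Matrix.det_transpose]
  have hTT : T⁻¹ * T = 1 := Matrix.nonsing_inv_mul T hT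
  have hTT' : T * T⁻¹ = 1 := Matrix.mul_nonsing_inv T hT
  have hAeq : A = T⁻¹ * B * T := by
    rw [hB]
    rw [show T⁻¹ * (T * A * T⁻¹) * T = (T⁻¹ * T) * A * (T⁻¹ * T) from by
      simp only [Matrix.mul_assoc], hTT, Matrix.one_mul, Matrix.mul_one]
  have hApow : ∀ k, A ^ k = T⁻¹ * B ^ k * T := by
    intro k
    induction k with
    | zero => rw [pow_zero, pow_zero, Matrix.mul_one, hTT]
    | succ k ih =>
      rw [pow_succ, ih, pow_succ, hAeq]
      simp only [Matrix.mul_assoc]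
      rw [← Matrix.mul_assoc T T⁻¹ (B * T), hTT', Matrix.one_mul]
  have hBbound : ∀ k (z : Fin n → ℝ),
      ((Bᵀ) ^ k *ᵥ z) ⬝ᵥ ((Bᵀ) ^ k *ᵥ z) ≤ (s ^ 2) ^ k * (z ⬝ᵥ z) := by
    intro k
    induction k with
    | zero => intro z; simp
    | succ k ih =>
      intro z
      rw [pow_succ']
      rw [← mulVec_mulVec]
      have h1 := opUBT B hn ((Bᵀ) ^ k *ᵥ z)
      have h2 := ih z
      have := dp_self_nonneg z
      calc (Bᵀ *ᵥ ((Bᵀ) ^ k *ᵥ z)) ⬝ᵥ (Bᵀ *ᵥ ((Bᵀ) ^ k *ᵥ z))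
          ≤ s ^ 2 * (((Bᵀ) ^ k *ᵥ z) ⬝ᵥ ((Bᵀ) ^ k *ᵥ z)) := h1
        _ ≤ s ^ 2 * ((s ^ 2) ^ k * (z ⬝ᵥ z)) := by nlinarith
        _ = (s ^ 2) ^ (k + 1) * (z ⬝ᵥ z) := by ring
  have hbpos := sigMin_pos hT hn
  have hbsq : 0 < sigMin T ^ 2 := pow_pos hbpos 2
  have hκ0 : 0 ≤ κ := div_nonneg (sq_nonneg _) hbsq.le
  have hAkbound : ∀ k (x : Fin n → ℝ),
      ((Aᵀ) ^ k *ᵥ x) ⬝ᵥ ((Aᵀ) ^ k *ᵥ x) ≤ κ * (s ^ 2) ^ k * (x ⬝ᵥ x) := by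
    intro k x
    have hAk : (Aᵀ) ^ k = Tᵀ * ((Bᵀ) ^ k * (Tᵀ)⁻¹) := by
      rw [← transpose_pow, hApow k, transpose_mul, transpose_mul, transpose_pow,
        Matrix.transpose_nonsing_inv]
    set z := (Tᵀ)⁻¹ *ᵥ x with hz
    have hx_z : Tᵀ *ᵥ z = x := by
      rw [hz, mulVec_mulVec, Matrix.mul_nonsing_inv _ hTt, one_mulVec]
    have hzb : z ⬝ᵥ z ≤ (x ⬝ᵥ x) / sigMin T ^ 2 := by
      have hlb := opLBT hT hn z
      rw [hx_z] at hlb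
      rw [le_div_iff₀ hbsq]
      linarith
    have h1 : (Aᵀ) ^ k *ᵥ x = Tᵀ *ᵥ ((Bᵀ) ^ k *ᵥ z) := by
      rw [hAk, ← mulVec_mulVec, ← mulVec_mulVec]
    rw [h1]
    have h2 := opUBT T hn ((Bᵀ) ^ k *ᵥ z)
    have h3 := hBbound k z
    have h4 : ((Bᵀ) ^ k *ᵥ z) ⬝ᵥ ((Bᵀ) ^ k *ᵥ z) ≤ (s ^ 2) ^ k * ((x ⬝ᵥ x) / sigMin T ^ 2) :=
      h3.trans (mul_le_mul_of_nonneg_left hzb (pow_nonneg hs2n k))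
    refine h2.trans ?_
    calc sigMax T ^ 2 * (((Bᵀ) ^ k *ᵥ z) ⬝ᵥ ((Bᵀ) ^ k *ᵥ z))
        ≤ sigMax T ^ 2 * ((s ^ 2) ^ k * ((x ⬝ᵥ x) / sigMin T ^ 2)) :=
          mul_le_mul_of_nonneg_left h4 (sq_nonneg _)
      _ = κ * (s ^ 2) ^ k * (x ⬝ᵥ x) := by rw [hκ]; field_simp
  have hQpsd := hQ.posSemidef
  have iter : ∀ N, P = (Aᵀ) ^ N * P * A ^ N + ∑ k ∈ Finset.range N, (Aᵀ) ^ k * Q * A ^ k := by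
    intro N
    induction N with
    | zero => simp
    | succ N ih =>
      calc P = (Aᵀ) ^ N * P * A ^ N + ∑ k ∈ Finset.range N, (Aᵀ) ^ k * Q * A ^ k := ih
        _ = (Aᵀ) ^ N * (Aᵀ * P * A + Q) * A ^ N + ∑ k ∈ Finset.range N, (Aᵀ) ^ k * Q * A ^ k := by
            rw [← heq]
        _ = (Aᵀ) ^ (N + 1) * P * A ^ (N + 1) + ∑ k ∈ Finset.range (N + 1), (Aᵀ) ^ k * Q * A ^ k := by
            rw [Finset.sum_range_succ, pow_succ, pow_succ', Matrix.mul_add, Matrix.add_mul]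
            simp only [Matrix.mul_assoc]
            abel
  have trQ0 : 0 ≤ Q.trace := psd_trace_nonneg hQpsd
  have geo : ∀ N, ∑ k ∈ Finset.range N, (s ^ 2) ^ k ≤ 1 / (1 - s ^ 2) := by
    intro N
    rw [geom_sum_eq (by nlinarith : (s ^ 2 : ℝ) ≠ 1)]
    rw [show ((s ^ 2) ^ N - 1) / (s ^ 2 - 1) = (1 - (s ^ 2) ^ N) / (1 - s ^ 2) from by
      rw [← neg_div_neg_eq]; ring_nf]
    have hxN : (0:ℝ) ≤ (s ^ 2) ^ N := pow_nonneg hs2n N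
    exact (div_le_div_iff_of_pos_right h1s).mpr (by linarith)
  have key : ∀ N, P.trace ≤ κ * P.trace * (s ^ 2) ^ N + κ * (Q.trace / (1 - s ^ 2)) := by
    intro N
    have e := congrArg Matrix.trace (iter N)
    rw [Matrix.trace_add, Matrix.trace_sum] at e
    have t1 : ((Aᵀ) ^ N * P * A ^ N).trace ≤ κ * P.trace * (s ^ 2) ^ N := by
      have h := traceLe hP (A ^ N) (c := κ * (s ^ 2) ^ N) (fun x => by
        rw [transpose_pow]; exact hAkbound N x)
      rw [transpose_pow] at h
      exact h.trans_eq (by ring)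
    have t2 : ∀ k ∈ Finset.range N, ((Aᵀ) ^ k * Q * A ^ k).trace ≤ κ * (s ^ 2) ^ k * Q.trace := by
      intro k _
      have h := traceLe hQpsd (A ^ k) (c := κ * (s ^ 2) ^ k) (fun x => by
        rw [transpose_pow]; exact hAkbound k x)
      rwa [transpose_pow] at h
    have sumle : ∑ k ∈ Finset.range N, ((Aᵀ) ^ k * Q * A ^ k).trace ≤
        ∑ k ∈ Finset.range N, κ * (s ^ 2) ^ k * Q.trace := Finset.sum_le_sum t2
    have sumeq : ∑ k ∈ Finset.range N, κ * (s ^ 2) ^ k * Q.trace =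
        κ * Q.trace * ∑ k ∈ Finset.range N, (s ^ 2) ^ k := by
      rw [Finset.mul_sum]
      exact Finset.sum_congr rfl fun k _ => by ring
    have hfin : κ * Q.trace * (∑ k ∈ Finset.range N, (s ^ 2) ^ k) ≤ κ * (Q.trace / (1 - s ^ 2)) := by
      have h := mul_le_mul_of_nonneg_left (geo N) (mul_nonneg hκ0 trQ0)
      calc κ * Q.trace * (∑ k ∈ Finset.range N, (s ^ 2) ^ k)
          ≤ κ * Q.trace * (1 / (1 - s ^ 2)) := h
        _ = κ * (Q.trace / (1 - s ^ 2)) := by ring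
    have t3 : ∑ k ∈ Finset.range N, ((Aᵀ) ^ k * Q * A ^ k).trace ≤ κ * (Q.trace / (1 - s ^ 2)) :=
      sumle.trans ((le_of_eq sumeq).trans hfin)
    linarith [e, t1, t3]
  have hlim : Filter.Tendsto (fun N => κ * P.trace * (s ^ 2) ^ N + κ * (Q.trace / (1 - s ^ 2)))
      Filter.atTop (nhds (κ * (Q.trace / (1 - s ^ 2)))) := by
    have h0 : Filter.Tendsto (fun N => (s ^ 2) ^ N) Filter.atTop (nhds 0) :=
      tendsto_pow_atTop_nhds_zero_of_lt_one hs2n hs2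
    have h1 := (h0.const_mul (κ * P.trace)).add_const (κ * (Q.trace / (1 - s ^ 2)))
    simpa using h1
  exact ge_of_tendsto' hlim key
end

section
/- If P is a positive semidefinite solution of the discrete algebraic Riccati equation P = Q + AᵀPA − AᵀPB(R + BᵀPB)^{-1}BᵀPA with Q positive definite and R positive definite, then P ⪰ Aᵀ(Q^{-1} + B R^{-1} Bᵀ)^{-1} A + Q (Loewner order). -/
open Matrix Finset

/- Auxiliary lemmas -/

/-- real congruence PSD -/
lemma psd_conj {k l : ℕ} {M : Matrix (Fin k) (Fin k) ℝ} (hM : M.PosSemidef)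
    (C : Matrix (Fin k) (Fin l) ℝ) : (Cᵀ * M * C).PosSemidef := by
  simpa [Matrix.conjTranspose_eq_transpose_of_trivial] using hM.conjTranspose_mul_mul_same C

lemma psd_trans_sym {k : ℕ} {M : Matrix (Fin k) (Fin k) ℝ} (hM : M.PosSemidef) : Mᵀ = M := by
  have := hM.isHermitian
  rwa [Matrix.IsHermitian, Matrix.conjTranspose_eq_transpose_of_trivial] at this

/-- Loewner antitonicity of inverse. -/
lemma inv_sub_psd {k : ℕ} {X Y : Matrix (Fin k) (Fin k) ℝ} (hX : X.PosDef) (hY : Y.PosDef)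
    (h : (Y - X).PosSemidef) : (X⁻¹ - Y⁻¹).PosSemidef := by
  obtain ⟨L, hL⟩ : ∃ L : Matrix (Fin k) (Fin k) ℝ, Y - X = Lᴴ * L := by
    open scoped MatrixOrder in exact CStarAlgebra.nonneg_iff_eq_star_mul_self.mp h.nonneg
  rw [Matrix.conjTranspose_eq_transpose_of_trivial] at hL
  have hXsym : Xᵀ = X := psd_trans_sym hX.posSemidef
  have hXisym : (X⁻¹)ᵀ = X⁻¹ := by rw [Matrix.transpose_nonsing_inv, hXsym]
  set S := 1 + L * X⁻¹ * Lᵀ with hSdef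
  have hSd : S.PosDef := by
    have : (L * X⁻¹ * Lᵀ).PosSemidef := by
      have := (hX.posSemidef.inv).mul_mul_conjTranspose_same L
      simpa [Matrix.conjTranspose_eq_transpose_of_trivial] using this
    exact Matrix.PosDef.one.add_posSemidef this
  have hX1 : X * X⁻¹ = 1 := Matrix.mul_nonsing_inv _ ((Matrix.isUnit_iff_isUnit_det _).mp hX.isUnit)
  have hS1 : S * S⁻¹ = 1 :=
    Matrix.mul_nonsing_inv _ ((Matrix.isUnit_iff_isUnit_det _).mp hSd.isUnit)
  have hX1' : ∀ (Z : Matrix (Fin k) (Fin k) ℝ), X * (X⁻¹ * Z) = Z := fun Z => by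
    rw [← Matrix.mul_assoc, hX1, Matrix.one_mul]
  have hS1' : ∀ (Z : Matrix (Fin k) (Fin k) ℝ), S * (S⁻¹ * Z) = Z := fun Z => by
    rw [← Matrix.mul_assoc, hS1, Matrix.one_mul]
  have hKey : ∀ (Z : Matrix (Fin k) (Fin k) ℝ), L * (X⁻¹ * (Lᵀ * Z)) = S * Z - Z := by
    intro Z
    rw [hSdef]
    simp only [Matrix.add_mul, Matrix.one_mul, Matrix.mul_assoc]
    abel
  have hYeq : Y = X + Lᵀ * L := by rw [← hL]; abel
  have key : Y * (X⁻¹ - X⁻¹ * (Lᵀ * (S⁻¹ * (L * X⁻¹)))) = 1 := by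
    rw [hYeq]
    simp only [Matrix.add_mul, Matrix.mul_add, Matrix.mul_sub, Matrix.sub_mul,
      Matrix.mul_assoc, hX1', hKey, hS1', hX1]
    abel
  have hYinv : Y⁻¹ = X⁻¹ - X⁻¹ * (Lᵀ * (S⁻¹ * (L * X⁻¹))) := Matrix.inv_eq_right_inv key
  have : X⁻¹ - Y⁻¹ = (L * X⁻¹)ᵀ * S⁻¹ * (L * X⁻¹) := by
    rw [hYinv, Matrix.transpose_mul, hXisym]
    simp only [Matrix.mul_assoc]
    abel
  rw [this]
  exact psd_conj (hSd.posSemidef.inv) _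

theorem stmt7 {n m : ℕ} (A P Q : Matrix (Fin n) (Fin n) ℝ)
    (B : Matrix (Fin n) (Fin m) ℝ) (R : Matrix (Fin m) (Fin m) ℝ)
    (hQ : Q.PosDef) (hR : R.PosDef) (hP : P.PosSemidef)
    (heq : P = Q + Aᵀ * P * A - Aᵀ * P * B * (R + Bᵀ * P * B)⁻¹ * Bᵀ * P * A) :
    (P - (Aᵀ * (Q⁻¹ + B * R⁻¹ * Bᵀ)⁻¹ * A + Q)).PosSemidef := by
  have hPsym : Pᵀ = P := psd_trans_sym hP
  have hRsym : Rᵀ = R := psd_trans_sym hR.posSemidef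
  set S := R + Bᵀ * P * B with hSdef
  have hSd : S.PosDef := hR.add_posSemidef (psd_conj hP B)
  have hSsym : Sᵀ = S := psd_trans_sym hSd.posSemidef
  have hSisym : (S⁻¹)ᵀ = S⁻¹ := by rw [Matrix.transpose_nonsing_inv, hSsym]
  have hS1 : S * S⁻¹ = 1 :=
    Matrix.mul_nonsing_inv _ ((Matrix.isUnit_iff_isUnit_det _).mp hSd.isUnit)
  have hS2 : S⁻¹ * S = 1 :=
    Matrix.nonsing_inv_mul _ ((Matrix.isUnit_iff_isUnit_det _).mp hSd.isUnit)
  have hR1 : R * R⁻¹ = 1 :=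
    Matrix.mul_nonsing_inv _ ((Matrix.isUnit_iff_isUnit_det _).mp hR.isUnit)
  have hS1' : ∀ {l : ℕ} (Z : Matrix (Fin m) (Fin l) ℝ), S * (S⁻¹ * Z) = Z := fun Z => by
    rw [← Matrix.mul_assoc, hS1, Matrix.one_mul]
  have hS2' : ∀ {l : ℕ} (Z : Matrix (Fin m) (Fin l) ℝ), S⁻¹ * (S * Z) = Z := fun Z => by
    rw [← Matrix.mul_assoc, hS2, Matrix.one_mul]
  have hR1' : ∀ {l : ℕ} (Z : Matrix (Fin m) (Fin l) ℝ), R * (R⁻¹ * Z) = Z := fun Z => by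
    rw [← Matrix.mul_assoc, hR1, Matrix.one_mul]
  have hKey : ∀ {l : ℕ} (Z : Matrix (Fin m) (Fin l) ℝ),
      Bᵀ * (P * (B * Z)) = S * Z - R * Z := by
    intro l Z
    rw [hSdef]
    simp only [Matrix.add_mul, Matrix.mul_assoc]
    abel
  set M := P - P * (B * (S⁻¹ * (Bᵀ * P))) with hMdef
  -- M is PSD via the completion-of-squares identity
  have hMid : (1 - B * (S⁻¹ * (Bᵀ * P)))ᵀ * P * (1 - B * (S⁻¹ * (Bᵀ * P)))
      + (S⁻¹ * (Bᵀ * P))ᵀ * R * (S⁻¹ * (Bᵀ * P)) = M := by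
    rw [hMdef]
    simp only [Matrix.transpose_sub, Matrix.transpose_one, Matrix.transpose_mul,
      Matrix.transpose_transpose, hPsym, hSisym]
    simp only [Matrix.add_mul, Matrix.mul_add, Matrix.mul_sub, Matrix.sub_mul,
      Matrix.mul_assoc, Matrix.one_mul, Matrix.mul_one, hKey, hS2', hR1']
    abel
  have hM : M.PosSemidef := by
    rw [← hMid]
    exact (psd_conj hP _).add (psd_conj hR.posSemidef _)
  -- P = Q + Aᵀ M A
  have heqM : P = Q + Aᵀ * M * A := by
    rw [heq, hMdef]
    simp only [Matrix.mul_sub, Matrix.sub_mul, Matrix.mul_assoc]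
    abel
  have hPd : P.PosDef := by rw [heqM]; exact hQ.add_posSemidef (psd_conj hM A)
  have hP1 : P * P⁻¹ = 1 :=
    Matrix.mul_nonsing_inv _ ((Matrix.isUnit_iff_isUnit_det _).mp hPd.isUnit)
  have hP1' : ∀ {l : ℕ} (Z : Matrix (Fin n) (Fin l) ℝ), P * (P⁻¹ * Z) = Z := fun Z => by
    rw [← Matrix.mul_assoc, hP1, Matrix.one_mul]
  -- matrix inversion lemma : M = (P⁻¹ + B R⁻¹ Bᵀ)⁻¹
  have hMinv : (P⁻¹ + B * R⁻¹ * Bᵀ)⁻¹ = M := by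
    apply Matrix.inv_eq_left_inv
    rw [hMdef]
    simp only [Matrix.add_mul, Matrix.mul_add, Matrix.mul_sub, Matrix.sub_mul,
      Matrix.mul_assoc, hP1, hP1', hKey, Matrix.mul_sub, hS2', hR1', Matrix.mul_one,
      Matrix.one_mul]
    abel
  -- P ⪰ Q hence Q⁻¹ ⪰ P⁻¹
  have hPQ : (P - Q).PosSemidef := by
    have : P - Q = Aᵀ * M * A := by rw [heqM]; abel
    rw [this]; exact psd_conj hM A
  have hinv1 : (Q⁻¹ - P⁻¹).PosSemidef := inv_sub_psd hQ hPd hPQ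
  have hBRB : (B * R⁻¹ * Bᵀ).PosSemidef := by
    have := (hR.posSemidef.inv).mul_mul_conjTranspose_same B
    simpa [Matrix.conjTranspose_eq_transpose_of_trivial] using this
  have hNP : (P⁻¹ + B * R⁻¹ * Bᵀ).PosDef := hPd.inv.add_posSemidef hBRB
  have hNQ : (Q⁻¹ + B * R⁻¹ * Bᵀ).PosDef := hQ.inv.add_posSemidef hBRB
  have hdiff : ((Q⁻¹ + B * R⁻¹ * Bᵀ) - (P⁻¹ + B * R⁻¹ * Bᵀ)).PosSemidef := by
    have : (Q⁻¹ + B * R⁻¹ * Bᵀ) - (P⁻¹ + B * R⁻¹ * Bᵀ) = Q⁻¹ - P⁻¹ := by abel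
    rw [this]; exact hinv1
  have hfinal : (M - (Q⁻¹ + B * R⁻¹ * Bᵀ)⁻¹).PosSemidef := by
    have := inv_sub_psd hNP hNQ hdiff
    rwa [hMinv] at this
  have hgoal : P - (Aᵀ * (Q⁻¹ + B * R⁻¹ * Bᵀ)⁻¹ * A + Q)
      = Aᵀ * (M - (Q⁻¹ + B * R⁻¹ * Bᵀ)⁻¹) * A := by
    rw [heqM]
    simp only [Matrix.mul_sub, Matrix.sub_mul]
    abel
  rw [hgoal]
  exact psd_conj hfinal A
end

section
/- Let A be a real n×n matrix, Q positive definite, R positive definite, B ∈ R^{n×m}, and let P be a positive semidefinite solution of the Riccati equation P = Q + AᵀPA − AᵀPB(R + BᵀPB)^{-1}BᵀPA. Then tr(P) ≥ n·σ_n(A)² / (1/λ_n(Q) + λ_1(B R^{-1} Bᵀ)) + tr(Q), where σ_n(A) is the smallest singular value of A, λ_n(Q) the smallest eigenvalue of Q, and λ_1(B R^{-1} Bᵀ) the largest eigenvalue of B R^{-1} Bᵀ. -/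
open Matrix Finset
open scoped MatrixOrder

section Helpers

variable {n : ℕ}

/-- the set of real eigenvalues -/
def eigSet (M : Matrix (Fin n) (Fin n) ℝ) : Set ℝ :=
  {x : ℝ | ∃ v : Fin n → ℝ, v ≠ 0 ∧ M *ᵥ v = x • v}

lemma real_psd_smul {M : Matrix (Fin n) (Fin n) ℝ} (hM : M.PosSemidef) {c : ℝ} (hc : 0 ≤ c) :
    (c • M).PosSemidef := by
  refine PosSemidef.of_dotProduct_mulVec_nonneg ?_ ?_
  · unfold Matrix.IsHermitian
    rw [conjTranspose_smul, hM.1]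
    simp
  · intro x
    have := hM.dotProduct_mulVec_nonneg x
    simp only [Matrix.smul_mulVec, dotProduct_smul, smul_eq_mul]
    positivity

lemma real_psd_trace_nonneg {M : Matrix (Fin n) (Fin n) ℝ} (hM : M.PosSemidef) :
    0 ≤ M.trace := by
  rw [Matrix.trace]
  apply Finset.sum_nonneg
  intro i _
  have := hM.dotProduct_mulVec_nonneg (Pi.single i 1)
  simpa [Matrix.diag, dotProduct, mulVec, Pi.single_apply, star_trivial] using this

lemma eig_mem {M : Matrix (Fin n) (Fin n) ℝ} (hM : M.IsHermitian) (i : Fin n) :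
    hM.eigenvalues i ∈ eigSet M := by
  refine ⟨⇑(hM.eigenvectorBasis i), ?_, hM.mulVec_eigenvectorBasis i⟩
  intro h
  apply hM.eigenvectorBasis.orthonormal.ne_zero i
  ext j
  exact congrFun h j

lemma eig_ge {M : Matrix (Fin n) (Fin n) ℝ} {c : ℝ} (h : (M - c • 1).PosSemidef)
    {x : ℝ} (hx : x ∈ eigSet M) : c ≤ x := by
  obtain ⟨v, hv, hMv⟩ := hx
  have h2 := h.dotProduct_mulVec_nonneg v
  have hvv : 0 < v ⬝ᵥ v := by
    rcases Function.ne_iff.mp hv with ⟨j, hj⟩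
    have : 0 < ∑ i, v i * v i := by
      apply Finset.sum_pos' (fun i _ => mul_self_nonneg _)
      exact ⟨j, Finset.mem_univ j, mul_self_pos.mpr hj⟩
    simpa [dotProduct] using this
  have : v ⬝ᵥ (M - c • 1) *ᵥ v = (x - c) * (v ⬝ᵥ v) := by
    rw [Matrix.sub_mulVec, hMv]
    simp [dotProduct_sub, dotProduct_smul, Matrix.smul_mulVec, sub_mul, mul_comm]
    ring
  rw [star_trivial] at h2
  nlinarith [h2, this]

lemma eig_le {M : Matrix (Fin n) (Fin n) ℝ} {c : ℝ} (h : (c • 1 - M).PosSemidef)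
    {x : ℝ} (hx : x ∈ eigSet M) : x ≤ c := by
  obtain ⟨v, hv, hMv⟩ := hx
  have h2 := h.dotProduct_mulVec_nonneg v
  have hvv : 0 < v ⬝ᵥ v := by
    rcases Function.ne_iff.mp hv with ⟨j, hj⟩
    have : 0 < ∑ i, v i * v i := by
      apply Finset.sum_pos' (fun i _ => mul_self_nonneg _)
      exact ⟨j, Finset.mem_univ j, mul_self_pos.mpr hj⟩
    simpa [dotProduct] using this
  have : v ⬝ᵥ (c • 1 - M) *ᵥ v = (c - x) * (v ⬝ᵥ v) := by
    rw [Matrix.sub_mulVec, hMv]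
    simp [dotProduct_sub, dotProduct_smul, Matrix.smul_mulVec, sub_mul, mul_comm]
    ring
  rw [star_trivial] at h2
  nlinarith [h2, this]

lemma shift_psd_lower {M : Matrix (Fin n) (Fin n) ℝ} (hM : M.IsHermitian) {c : ℝ}
    (h : ∀ i, c ≤ hM.eigenvalues i) : (M - c • 1).PosSemidef := by
  have hU : (hM.eigenvectorUnitary : Matrix (Fin n) (Fin n) ℝ) *
      (star (hM.eigenvectorUnitary : Matrix (Fin n) (Fin n) ℝ)) = 1 :=
    Matrix.mem_unitaryGroup_iff.mp hM.eigenvectorUnitary.2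
  have key : M - c • 1 = (hM.eigenvectorUnitary : Matrix (Fin n) (Fin n) ℝ) *
      (diagonal (fun i => hM.eigenvalues i - c)) *
      (star (hM.eigenvectorUnitary : Matrix (Fin n) (Fin n) ℝ)) := by
    conv_lhs => rw [hM.spectral_theorem, Unitary.conjStarAlgAut_apply]
    have hdiag : diagonal (fun i => hM.eigenvalues i - c)
        = diagonal (RCLike.ofReal ∘ hM.eigenvalues) - c • (1 : Matrix (Fin n) (Fin n) ℝ) := by
      rw [Matrix.smul_one_eq_diagonal, ← diagonal_sub]
      rfl
    rw [hdiag, Matrix.mul_sub, Matrix.sub_mul, Matrix.mul_smul, Matrix.smul_mul, mul_one, hU]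
  rw [key]
  have h1 : (diagonal (fun i => hM.eigenvalues i - c)).PosSemidef :=
    Matrix.PosSemidef.diagonal (fun i => by simpa using h i)
  have h2 := h1.mul_mul_conjTranspose_same (hM.eigenvectorUnitary : Matrix (Fin n) (Fin n) ℝ)
  rwa [conjTranspose_eq_transpose_of_trivial] at h2

lemma shift_psd_upper {M : Matrix (Fin n) (Fin n) ℝ} (hM : M.IsHermitian) {c : ℝ}
    (h : ∀ i, hM.eigenvalues i ≤ c) : (c • 1 - M).PosSemidef := by
  have hU : (hM.eigenvectorUnitary : Matrix (Fin n) (Fin n) ℝ) *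
      (star (hM.eigenvectorUnitary : Matrix (Fin n) (Fin n) ℝ)) = 1 :=
    Matrix.mem_unitaryGroup_iff.mp hM.eigenvectorUnitary.2
  have key : c • 1 - M = (hM.eigenvectorUnitary : Matrix (Fin n) (Fin n) ℝ) *
      (diagonal (fun i => c - hM.eigenvalues i)) *
      (star (hM.eigenvectorUnitary : Matrix (Fin n) (Fin n) ℝ)) := by
    conv_lhs => rw [hM.spectral_theorem, Unitary.conjStarAlgAut_apply]
    have hdiag : diagonal (fun i => c - hM.eigenvalues i)
        = c • (1 : Matrix (Fin n) (Fin n) ℝ) - diagonal (RCLike.ofReal ∘ hM.eigenvalues) := by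
      rw [Matrix.smul_one_eq_diagonal, ← diagonal_sub]
      rfl
    rw [hdiag, Matrix.mul_sub, Matrix.sub_mul, Matrix.mul_smul, Matrix.smul_mul, mul_one, hU]
  rw [key]
  have h1 : (diagonal (fun i => c - hM.eigenvalues i)).PosSemidef :=
    Matrix.PosSemidef.diagonal (fun i => by simpa using h i)
  have h2 := h1.mul_mul_conjTranspose_same (hM.eigenvectorUnitary : Matrix (Fin n) (Fin n) ℝ)
  rwa [conjTranspose_eq_transpose_of_trivial] at h2

end Helpers

section LamSpec

variable {n : ℕ}

lemma lamMin_def (M : Matrix (Fin n) (Fin n) ℝ) : lamMin M = sInf (eigSet M) := rfl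
lemma lamMax_def (M : Matrix (Fin n) (Fin n) ℝ) : lamMax M = sSup (eigSet M) := rfl

lemma lamMin_spec (hn : 0 < n) {M : Matrix (Fin n) (Fin n) ℝ} (hM : M.IsHermitian) :
    (∃ i, lamMin M = hM.eigenvalues i) ∧ (M - lamMin M • 1).PosSemidef := by
  haveI : Nonempty (Fin n) := ⟨⟨0, hn⟩⟩
  obtain ⟨i₀, -, hi₀⟩ :=
    Finset.exists_min_image Finset.univ hM.eigenvalues ⟨Classical.arbitrary _, Finset.mem_univ _⟩
  have hpsd := shift_psd_lower hM (c := hM.eigenvalues i₀) (fun i => hi₀ i (Finset.mem_univ i))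
  have hle : sInf (eigSet M) ≤ hM.eigenvalues i₀ :=
    csInf_le ⟨_, fun x hx => eig_ge hpsd hx⟩ (eig_mem hM i₀)
  have hge : hM.eigenvalues i₀ ≤ sInf (eigSet M) :=
    le_csInf ⟨_, eig_mem hM i₀⟩ (fun x hx => eig_ge hpsd hx)
  have heq : lamMin M = hM.eigenvalues i₀ := le_antisymm hle hge
  exact ⟨⟨i₀, heq⟩, heq ▸ hpsd⟩

lemma lamMax_spec (hn : 0 < n) {M : Matrix (Fin n) (Fin n) ℝ} (hM : M.IsHermitian) :
    (∃ i, lamMax M = hM.eigenvalues i) ∧ (lamMax M • 1 - M).PosSemidef := by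
  haveI : Nonempty (Fin n) := ⟨⟨0, hn⟩⟩
  obtain ⟨i₀, -, hi₀⟩ :=
    Finset.exists_max_image Finset.univ hM.eigenvalues ⟨Classical.arbitrary _, Finset.mem_univ _⟩
  have hpsd := shift_psd_upper hM (c := hM.eigenvalues i₀) (fun i => hi₀ i (Finset.mem_univ i))
  have hle : hM.eigenvalues i₀ ≤ sSup (eigSet M) :=
    le_csSup ⟨_, fun x hx => eig_le hpsd hx⟩ (eig_mem hM i₀)
  have hge : sSup (eigSet M) ≤ hM.eigenvalues i₀ :=
    csSup_le ⟨_, eig_mem hM i₀⟩ (fun x hx => eig_le hpsd hx)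
  have heq : lamMax M = hM.eigenvalues i₀ := le_antisymm hge hle
  exact ⟨⟨i₀, heq⟩, heq ▸ hpsd⟩

lemma trace_eq_sum_eig {M : Matrix (Fin n) (Fin n) ℝ} (hM : M.IsHermitian) :
    M.trace = ∑ i, hM.eigenvalues i := by
  conv_lhs => rw [hM.spectral_theorem, Unitary.conjStarAlgAut_apply]
  rw [Matrix.trace_mul_cycle]
  rw [Matrix.mem_unitaryGroup_iff'.mp hM.eigenvectorUnitary.2, one_mul, Matrix.trace_diagonal]
  simp

end LamSpec

theorem stmt13 {n m : ℕ} (A P Q : Matrix (Fin n) (Fin n) ℝ)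
    (B : Matrix (Fin n) (Fin m) ℝ) (R : Matrix (Fin m) (Fin m) ℝ)
    (hQ : Q.PosDef) (hR : R.PosDef) (hP : P.PosSemidef)
    (heq : P = Q + Aᵀ * P * A - Aᵀ * P * B * (R + Bᵀ * P * B)⁻¹ * Bᵀ * P * A) :
    (n : ℝ) * sigMin A ^ 2 / (1 / lamMin Q + lamMax (B * R⁻¹ * Bᵀ)) + Q.trace ≤ P.trace := by
  rcases Nat.eq_zero_or_pos n with hn | hn
  · subst hn
    have hset : ∀ (M : Matrix (Fin 0) (Fin 0) ℝ),
        {x : ℝ | ∃ v : Fin 0 → ℝ, v ≠ 0 ∧ M *ᵥ v = x • v} = ∅ := by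
      intro M
      ext x
      simp only [Set.mem_setOf_eq, Set.mem_empty_iff_false, iff_false, not_exists]
      intro v ⟨hv, _⟩
      exact hv (funext fun i => i.elim0)
    have h1 : lamMin Q = 0 := by rw [lamMin, hset, Real.sInf_empty]
    have h2 : lamMax (B * R⁻¹ * Bᵀ) = 0 := by rw [lamMax, hset, Real.sSup_empty]
    have h3 : sigMin A = 0 := by rw [sigMin, lamMin, hset, Real.sInf_empty, Real.sqrt_zero]
    simp [h1, h2, h3, Matrix.trace]
  -- main case
  have trp : ∀ {k l : ℕ} (M : Matrix (Fin k) (Fin l) ℝ), Mᴴ = Mᵀ := fun M =>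
    Matrix.conjTranspose_eq_transpose_of_trivial M
  set S := R + Bᵀ * P * B with hSdef
  have hBPB : (Bᵀ * P * B).PosSemidef := by
    have := hP.conjTranspose_mul_mul_same B; rwa [trp] at this
  have hS : S.PosDef := hR.add_posSemidef hBPB
  have hSd : IsUnit S.det := (Matrix.isUnit_iff_isUnit_det _).mp hS.isUnit
  have hS1 : S * S⁻¹ = 1 := Matrix.mul_nonsing_inv _ hSd
  have hS2 : S⁻¹ * S = 1 := Matrix.nonsing_inv_mul _ hSd
  have hSsymm : Sᵀ = S := by rw [← trp]; exact hS.isHermitian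
  have hSisym : S⁻¹ᵀ = S⁻¹ := by rw [Matrix.transpose_nonsing_inv, hSsymm]
  have hPsymm : Pᵀ = P := by rw [← trp]; exact hP.isHermitian
  set M₀ := P - P * B * S⁻¹ * (Bᵀ * P) with hM₀def
  -- transposes
  have hZt : (S⁻¹ * Bᵀ * P)ᵀ = P * B * S⁻¹ := by
    simp [Matrix.transpose_mul, hSisym, hPsymm, Matrix.mul_assoc]
  have hCt : (1 - B * (S⁻¹ * Bᵀ * P))ᵀ = 1 - P * B * S⁻¹ * Bᵀ := by
    simp [Matrix.transpose_sub, Matrix.transpose_one, Matrix.transpose_mul, hSisym, hPsymm,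
      Matrix.mul_assoc]
  -- key decomposition of M₀
  have hR' : R = S - Bᵀ * P * B := by rw [hSdef]; abel
  have h3 : S⁻¹ * S * S⁻¹ = S⁻¹ := by rw [hS2, one_mul]
  have key1 : (1 - B * (S⁻¹ * Bᵀ * P))ᵀ * P * (1 - B * (S⁻¹ * Bᵀ * P))
      + (S⁻¹ * Bᵀ * P)ᵀ * R * (S⁻¹ * Bᵀ * P) = M₀ := by
    rw [hCt, hZt, hM₀def]
    have expand : (1 - P * B * S⁻¹ * Bᵀ) * P * (1 - B * (S⁻¹ * Bᵀ * P))
        + (P * B * S⁻¹) * R * (S⁻¹ * Bᵀ * P)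
        = (P - P * B * S⁻¹ * (Bᵀ * P)) - P * B * S⁻¹ * (Bᵀ * P)
          + P * B * (S⁻¹ * S * S⁻¹) * (Bᵀ * P) := by
      rw [hR']
      simp only [Matrix.mul_sub, Matrix.sub_mul, Matrix.mul_add, Matrix.add_mul,
        Matrix.mul_one, Matrix.one_mul, Matrix.mul_assoc]
      abel
    rw [expand, h3]
    abel
  have hM₀psd : M₀.PosSemidef := by
    rw [← key1]
    apply Matrix.PosSemidef.add
    · have := hP.conjTranspose_mul_mul_same (1 - B * (S⁻¹ * Bᵀ * P)); rwa [trp] at this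
    · have := hR.posSemidef.conjTranspose_mul_mul_same (S⁻¹ * Bᵀ * P); rwa [trp] at this
  -- P - Q = Aᵀ M₀ A
  have hPQ : P - Q = Aᵀ * M₀ * A := by
    rw [hM₀def]
    conv_lhs => rw [heq]
    simp only [Matrix.mul_sub, Matrix.sub_mul, Matrix.mul_assoc]
    abel
  have hPQpsd : (P - Q).PosSemidef := by
    rw [hPQ]
    have := hM₀psd.conjTranspose_mul_mul_same A; rwa [trp] at this
  have hPpd : P.PosDef := by
    have e : P = Q + (P - Q) := by abel
    rw [e]; exact hQ.add_posSemidef hPQpsd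
  have hPd : IsUnit P.det := (Matrix.isUnit_iff_isUnit_det _).mp hPpd.isUnit
  have hP1 : P * P⁻¹ = 1 := Matrix.mul_nonsing_inv _ hPd
  have hPisym : P⁻¹ᵀ = P⁻¹ := by
    rw [Matrix.transpose_nonsing_inv, hPsymm]
  -- λmin Q
  obtain ⟨⟨iQ, hiQ⟩, hQshift⟩ := lamMin_spec hn hQ.isHermitian
  have hq : 0 < lamMin Q := by rw [hiQ]; exact hQ.eigenvalues_pos iQ
  have hPq : (P - lamMin Q • 1).PosSemidef := by
    have h := hPQpsd.add hQshift
    have e : P - Q + (Q - lamMin Q • 1) = P - lamMin Q • 1 := by abel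
    rwa [e] at h
  -- W = B R⁻¹ Bᵀ
  have hW : (B * R⁻¹ * Bᵀ).PosSemidef := by
    have := hR.inv.posSemidef.mul_mul_conjTranspose_same B; rwa [trp] at this
  obtain ⟨⟨iW, hiW⟩, hWshift⟩ := lamMax_spec hn hW.isHermitian
  have hb : 0 ≤ lamMax (B * R⁻¹ * Bᵀ) := by rw [hiW]; exact hW.eigenvalues_nonneg iW
  set q := lamMin Q with hqdef
  set b := lamMax (B * R⁻¹ * Bᵀ) with hbdef
  set D := 1 / q + b with hDdef
  have hD : 0 < D := by positivity
  -- (1/q) • 1 - P⁻¹ is PSD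
  have hPinvpsd : (P⁻¹).PosSemidef := hPpd.inv.posSemidef
  set G := CFC.sqrt (P⁻¹) with hGdef
  have hGG : G * G = P⁻¹ := CFC.sqrt_mul_sqrt_self _ hPinvpsd.nonneg
  have hGsym : Gᵀ = G := by rw [← trp]; exact (CFC.sqrt_nonneg _).posSemidef.isHermitian
  have hGd : IsUnit G.det := by
    have hdet : G.det * G.det = (P⁻¹).det := by rw [← Matrix.det_mul, hGG]
    have h1 : IsUnit (P⁻¹).det := Matrix.isUnit_nonsing_inv_det P hPd
    rw [isUnit_iff_ne_zero] at h1 ⊢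
    intro h0
    exact h1 (by rw [← hdet, h0, mul_zero])
  have hG1 : G * G⁻¹ = 1 := Matrix.mul_nonsing_inv _ hGd
  have hG2 : G⁻¹ * G = 1 := Matrix.nonsing_inv_mul _ hGd
  have hGPG : G * P * G = 1 := by
    have hPinvinv : P⁻¹⁻¹ = P := Matrix.nonsing_inv_nonsing_inv _ hPd
    have e : P = (G * G)⁻¹ := by rw [hGG, hPinvinv]
    rw [e, Matrix.mul_inv_rev]
    calc G * (G⁻¹ * G⁻¹) * G = G * G⁻¹ * (G⁻¹ * G) := by
          simp only [Matrix.mul_assoc]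
      _ = 1 := by rw [hG1, hG2, one_mul]
  have hPinvub : ((1 / q) • (1 : Matrix (Fin n) (Fin n) ℝ) - P⁻¹).PosSemidef := by
    have hX : ((1 / q) • (P - q • (1 : Matrix (Fin n) (Fin n) ℝ))).PosSemidef :=
      real_psd_smul hPq (by positivity)
    have hconj := hX.conjTranspose_mul_mul_same G
    rw [trp, hGsym] at hconj
    have hid : G * ((1 / q) • (P - q • 1)) * G
        = (1 / q) • (1 : Matrix (Fin n) (Fin n) ℝ) - P⁻¹ := by
      rw [Matrix.mul_smul, Matrix.smul_mul, Matrix.mul_sub, Matrix.sub_mul,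
        Matrix.mul_smul, Matrix.smul_mul, Matrix.mul_one, hGPG, hGG, smul_sub,
        smul_smul, one_div, inv_mul_cancel₀ hq.ne', one_smul]
    rwa [hid] at hconj
  -- N and its bound
  set N := P⁻¹ + B * R⁻¹ * Bᵀ with hNdef
  have hNpd : N.PosDef := hPpd.inv.add_posSemidef hW
  have hDN : (D • (1 : Matrix (Fin n) (Fin n) ℝ) - N).PosSemidef := by
    have h := hPinvub.add hWshift
    have e : ((1 / q) • (1 : Matrix (Fin n) (Fin n) ℝ) - P⁻¹)
        + (b • (1 : Matrix (Fin n) (Fin n) ℝ) - B * R⁻¹ * Bᵀ) = D • 1 - N := by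
      rw [hDdef, add_smul, hNdef]; abel
    rwa [e] at h
  -- Woodbury: M₀ * N = 1
  have hRR : R * R⁻¹ = 1 := Matrix.mul_nonsing_inv _ ((Matrix.isUnit_iff_isUnit_det _).mp hR.isUnit)
  have hMN : M₀ * N = 1 := by
    rw [hM₀def, hNdef]
    have e1 : (P - P * B * S⁻¹ * (Bᵀ * P)) * (P⁻¹ + B * R⁻¹ * Bᵀ)
        = P * P⁻¹ + P * B * R⁻¹ * Bᵀ - P * B * S⁻¹ * Bᵀ * (P * P⁻¹)
          - P * B * S⁻¹ * (Bᵀ * P * B) * (R⁻¹ * Bᵀ) := by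
      simp only [Matrix.mul_sub, Matrix.sub_mul, Matrix.mul_add, Matrix.add_mul,
        Matrix.mul_one, Matrix.one_mul, Matrix.mul_assoc]
      abel
    rw [e1, hP1]
    have hBPB' : Bᵀ * P * B = S - R := by rw [hSdef]; abel
    rw [hBPB']
    have e2 : (1 : Matrix (Fin n) (Fin n) ℝ) + P * B * R⁻¹ * Bᵀ - P * B * S⁻¹ * Bᵀ * 1
        - P * B * S⁻¹ * (S - R) * (R⁻¹ * Bᵀ)
        = 1 + P * B * R⁻¹ * Bᵀ - P * B * S⁻¹ * Bᵀ - P * B * ((S⁻¹ * S) * (R⁻¹ * Bᵀ))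
          + P * B * (S⁻¹ * ((R * R⁻¹) * Bᵀ)) := by
      simp only [Matrix.mul_sub, Matrix.sub_mul, Matrix.mul_one, Matrix.one_mul,
        Matrix.mul_assoc]
      abel
    rw [e2, hS2, hRR]
    simp only [Matrix.mul_one, Matrix.one_mul, Matrix.mul_assoc]
    abel
  have hNinv : N⁻¹ = M₀ := Matrix.inv_eq_right_inv (mul_eq_one_comm.mp hMN)
  have hNd : IsUnit N.det := (Matrix.isUnit_iff_isUnit_det _).mp hNpd.isUnit
  have hN1 : N * N⁻¹ = 1 := Matrix.mul_nonsing_inv _ hNd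
  have hN2 : N⁻¹ * N = 1 := Matrix.nonsing_inv_mul _ hNd
  have hNsymm : Nᵀ = N := by rw [← trp]; exact hNpd.isHermitian
  have hNisym : N⁻¹ᵀ = N⁻¹ := by rw [Matrix.transpose_nonsing_inv, hNsymm]
  -- M₀ ⪰ (1/D) • 1
  set F := CFC.sqrt N with hFdef
  have hFF : F * F = N := CFC.sqrt_mul_sqrt_self _ hNpd.posSemidef.nonneg
  have hFsym : Fᵀ = F := by rw [← trp]; exact (CFC.sqrt_nonneg _).posSemidef.isHermitian
  have step1 : (D • N - N * N).PosSemidef := by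
    have h := hDN.conjTranspose_mul_mul_same F
    rw [trp, hFsym] at h
    have hid : F * (D • (1 : Matrix (Fin n) (Fin n) ℝ) - N) * F = D • N - N * N := by
      rw [← hFF]; noncomm_ring
    rwa [hid] at h
  have step2 : (D • M₀ - 1).PosSemidef := by
    have h := step1.conjTranspose_mul_mul_same N⁻¹
    rw [trp, hNisym] at h
    have hid : N⁻¹ * (D • N - N * N) * N⁻¹ = D • N⁻¹ - 1 := by
      have e : N⁻¹ * (D • N - N * N) * N⁻¹
          = D • (N⁻¹ * N * N⁻¹) - (N⁻¹ * N) * (N * N⁻¹) := by noncomm_ring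
      rw [e, hN2, hN1, one_mul, mul_one]
    rw [hid, hNinv] at h
    exact h
  have step3 : (M₀ - (1 / D) • (1 : Matrix (Fin n) (Fin n) ℝ)).PosSemidef := by
    have h := real_psd_smul step2 (c := 1 / D) (by positivity)
    have e : (1 / D) • (D • M₀ - 1) = M₀ - (1 / D) • (1 : Matrix (Fin n) (Fin n) ℝ) := by
      rw [smul_sub, smul_smul, one_div, inv_mul_cancel₀ hD.ne', one_smul]
    rwa [e] at h
  -- trace estimates
  have hAA : (Aᵀ * A).PosSemidef := by
    have := Matrix.posSemidef_conjTranspose_mul_self A; rwa [trp] at this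
  obtain ⟨⟨iA, hiA⟩, hAshift⟩ := lamMin_spec hn hAA.isHermitian
  have hs0 : 0 ≤ lamMin (Aᵀ * A) := by rw [hiA]; exact hAA.eigenvalues_nonneg iA
  have hsig : sigMin A ^ 2 = lamMin (Aᵀ * A) := Real.sq_sqrt hs0
  have htrAA : (n : ℝ) * lamMin (Aᵀ * A) ≤ (Aᵀ * A).trace := by
    rw [trace_eq_sum_eig hAA.isHermitian]
    have hle : ∀ i : Fin n, lamMin (Aᵀ * A) ≤ hAA.isHermitian.eigenvalues i := fun i =>
      eig_ge hAshift (eig_mem hAA.isHermitian i)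
    calc (n : ℝ) * lamMin (Aᵀ * A) = ∑ _i : Fin n, lamMin (Aᵀ * A) := by
          simp [Finset.sum_const, nsmul_eq_mul]
      _ ≤ ∑ i, hAA.isHermitian.eigenvalues i := Finset.sum_le_sum (fun i _ => hle i)
  have htrM : (1 / D) * (Aᵀ * A).trace ≤ (Aᵀ * M₀ * A).trace := by
    have h1 : Aᵀ * M₀ * A - Aᵀ * ((1 / D) • (1 : Matrix (Fin n) (Fin n) ℝ)) * A
        = Aᵀ * (M₀ - (1 / D) • 1) * A := by
      simp only [Matrix.mul_sub, Matrix.sub_mul]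
    have h2 : (Aᵀ * (M₀ - (1 / D) • (1 : Matrix (Fin n) (Fin n) ℝ)) * A).PosSemidef := by
      have := step3.conjTranspose_mul_mul_same A; rwa [trp] at this
    have h3 := real_psd_trace_nonneg h2
    rw [← h1, Matrix.trace_sub] at h3
    have h4 : Aᵀ * ((1 / D) • (1 : Matrix (Fin n) (Fin n) ℝ)) * A = (1 / D) • (Aᵀ * A) := by
      rw [Matrix.mul_smul, Matrix.mul_one, Matrix.smul_mul]
    rw [h4, Matrix.trace_smul] at h3
    simp only [smul_eq_mul] at h3
    linarith
  have htrPQ : P.trace - Q.trace = (Aᵀ * M₀ * A).trace := by rw [← Matrix.trace_sub, hPQ]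
  -- wrap up
  rw [hsig]
  have h5 : (1 / D) * ((n : ℝ) * lamMin (Aᵀ * A)) ≤ (1 / D) * (Aᵀ * A).trace :=
    mul_le_mul_of_nonneg_left htrAA (by positivity)
  have h6 : (n : ℝ) * lamMin (Aᵀ * A) / D = (1 / D) * ((n : ℝ) * lamMin (Aᵀ * A)) := by
    ring
  linarith
end

section
/- Let P_1, P_2 be positive semidefinite solutions of the discrete algebraic Riccati equation P = Q_i + AᵀPA − AᵀPB(R + BᵀPB)^{-1}BᵀPA for i = 1,2 with 0 ⪯ Q_1 ⪯ Q_2, both (A, Q_i^{1/2}) detectable and (A,B) stabilizable. Then P_1 ⪯ P_2 (monotonicity of the Riccati equation solution in Q). -/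
open Matrix Finset

/-- PBH detectability of the pair `(A, C)`: every eigenvector of `A` for an
eigenvalue of modulus `≥ 1` is visible through `C`. -/
def Detectable {n p : ℕ} (A : Matrix (Fin n) (Fin n) ℝ)
    (C : Matrix (Fin p) (Fin n) ℝ) : Prop :=
  ∀ (μ : ℂ) (v : Fin n → ℂ), v ≠ 0 → (A.map (fun a => (a : ℂ))) *ᵥ v = μ • v →
    1 ≤ ‖μ‖ → (C.map (fun a => (a : ℂ))) *ᵥ v ≠ 0

/-- PBH stabilizability of the pair `(A, B)`: every left eigenvector of `A` for an
eigenvalue of modulus `≥ 1` is reachable through `B`. -/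
def Stabilizable {n m : ℕ} (A : Matrix (Fin n) (Fin n) ℝ)
    (B : Matrix (Fin n) (Fin m) ℝ) : Prop :=
  ∀ (μ : ℂ) (v : Fin n → ℂ), v ≠ 0 → (Aᵀ.map (fun a => (a : ℂ))) *ᵥ v = μ • v →
    1 ≤ ‖μ‖ → (Bᵀ.map (fun a => (a : ℂ))) *ᵥ v ≠ 0

/-- The positive semidefinite square root of a positive semidefinite matrix
(the definition of `Matrix.PosSemidef.sqrt` in the older Mathlib, since removed). -/
noncomputable def Matrix.PosSemidef.sqrt {n : Type*} [Fintype n] [DecidableEq n]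
    {𝕜 : Type*} [RCLike 𝕜] [PartialOrder 𝕜] {A : Matrix n n 𝕜} (hA : A.PosSemidef) : Matrix n n 𝕜 :=
  hA.1.eigenvectorUnitary.1 * diagonal ((↑) ∘ (Real.sqrt ∘ hA.1.eigenvalues)) *
  (star hA.1.eigenvectorUnitary : Matrix n n 𝕜)

open scoped ComplexOrder

namespace RicAux


/-- complexification of a real matrix -/
def mc {a b : ℕ} (M : Matrix (Fin a) (Fin b) ℝ) : Matrix (Fin a) (Fin b) ℂ :=
  M.map (fun x => (x : ℂ))

lemma mc_mul {a b c : ℕ} (M : Matrix (Fin a) (Fin b) ℝ) (N : Matrix (Fin b) (Fin c) ℝ) :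
    mc (M * N) = mc M * mc N := by
  ext i j
  simp [mc, Matrix.map_apply, Matrix.mul_apply]

lemma mc_add {a b : ℕ} (M N : Matrix (Fin a) (Fin b) ℝ) : mc (M + N) = mc M + mc N := by
  ext i j; simp [mc]

lemma mc_sub {a b : ℕ} (M N : Matrix (Fin a) (Fin b) ℝ) : mc (M - N) = mc M - mc N := by
  ext i j; simp [mc]

lemma mc_conjTranspose {a b : ℕ} (M : Matrix (Fin a) (Fin b) ℝ) : (mc M)ᴴ = mc Mᵀ := by
  ext i j; simp [mc, Matrix.conjTranspose_apply, Matrix.map_apply]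

lemma mc_one {a : ℕ} [DecidableEq (Fin a)] : mc (1 : Matrix (Fin a) (Fin a) ℝ) = 1 := by
  ext i j; by_cases h : i = j <;> simp [mc, Matrix.one_apply, h]

lemma mc_pow {a : ℕ} [DecidableEq (Fin a)] (M : Matrix (Fin a) (Fin a) ℝ) (k : ℕ) :
    mc (M ^ k) = (mc M) ^ k := by
  induction k with
  | zero => simpa using mc_one
  | succ k ih => rw [pow_succ, pow_succ, mc_mul, ih]

lemma real_conjTranspose_eq_transpose {a b : ℕ} (M : Matrix (Fin a) (Fin b) ℝ) : Mᴴ = Mᵀ := by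
  ext i j; simp [Matrix.conjTranspose_apply]

lemma real_transpose_eq {a : ℕ} {M : Matrix (Fin a) (Fin a) ℝ} (h : M.IsHermitian) : Mᵀ = M := by
  rw [← real_conjTranspose_eq_transpose, h]

lemma psd_sqrt_mul_self {a : ℕ} [DecidableEq (Fin a)] {M : Matrix (Fin a) (Fin a) ℝ} (h : M.PosSemidef) :
    h.sqrt * h.sqrt = M := by
  have hU := Unitary.coe_star_mul_self h.1.eigenvectorUnitary
  have hd : diagonal ((↑) ∘ (Real.sqrt ∘ h.1.eigenvalues)) *
      diagonal ((↑) ∘ (Real.sqrt ∘ h.1.eigenvalues))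
      = diagonal (RCLike.ofReal ∘ h.1.eigenvalues : Fin a → ℝ) := by
    rw [diagonal_mul_diagonal]; congr 1; funext i
    simp [Real.mul_self_sqrt (h.eigenvalues_nonneg i)]
  conv_rhs => rw [h.1.spectral_theorem, Unitary.conjStarAlgAut_apply]
  unfold Matrix.PosSemidef.sqrt
  rw [← hd]
  simp only [Matrix.mul_assoc]
  rw [← Matrix.mul_assoc (star h.1.eigenvectorUnitary : Matrix (Fin a) (Fin a) ℝ) _ _, hU,
    Matrix.one_mul]
  rfl

lemma psd_sqrt_isHermitian {a : ℕ} [DecidableEq (Fin a)] {M : Matrix (Fin a) (Fin a) ℝ} (h : M.PosSemidef) :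
    h.sqrt.IsHermitian := by
  unfold Matrix.PosSemidef.sqrt
  rw [IsHermitian]
  simp [Matrix.mul_assoc, Matrix.star_eq_conjTranspose, conjTranspose_eq_transpose_of_trivial]

lemma posSemidef_mc {a : ℕ} {M : Matrix (Fin a) (Fin a) ℝ} (h : M.PosSemidef) :
    (mc M).PosSemidef := by
  obtain ⟨C, rfl⟩ : ∃ C : Matrix (Fin a) (Fin a) ℝ, M = Cᴴ * C :=
    ⟨h.sqrt, by rw [(psd_sqrt_isHermitian h).eq, psd_sqrt_mul_self]⟩
  rw [mc_mul, real_conjTranspose_eq_transpose, ← mc_conjTranspose]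
  exact Matrix.posSemidef_conjTranspose_mul_self _



lemma key' {n m : ℕ} [DecidableEq (Fin m)]
    (A : Matrix (Fin n) (Fin n) ℝ) (B : Matrix (Fin n) (Fin m) ℝ)
    (R : Matrix (Fin m) (Fin m) ℝ) (P Q : Matrix (Fin n) (Fin n) ℝ)
    (hRT : Rᵀ = R) (hPT : Pᵀ = P)
    (hU : IsUnit (R + Bᵀ * P * B).det)
    (heq : P = Q + Aᵀ * P * A - Aᵀ * P * B * (R + Bᵀ * P * B)⁻¹ * Bᵀ * P * A)
    (K : Matrix (Fin m) (Fin n) ℝ) :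
    P = Q + Kᵀ * R * K + (A - B * K)ᵀ * P * (A - B * K)
      - (K - (R + Bᵀ * P * B)⁻¹ * (Bᵀ * P * A))ᵀ * (R + Bᵀ * P * B)
        * (K - (R + Bᵀ * P * B)⁻¹ * (Bᵀ * P * A)) := by
  have hU' : IsUnit (R + Bᵀ * (P * B)).det := by rwa [← Matrix.mul_assoc]
  have hST : (R + Bᵀ * (P * B))ᵀ = R + Bᵀ * (P * B) := by
    rw [Matrix.transpose_add, Matrix.transpose_mul, Matrix.transpose_mul, hRT, hPT,
      Matrix.transpose_transpose, Matrix.mul_assoc]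
  have c1 : ∀ (X : Matrix (Fin m) (Fin n) ℝ),
      (R + Bᵀ * (P * B))⁻¹ * ((R + Bᵀ * (P * B)) * X) = X :=
    fun X => Matrix.nonsing_inv_mul_cancel_left _ _ hU'
  have c2 : ∀ (X : Matrix (Fin m) (Fin n) ℝ),
      (R + Bᵀ * (P * B)) * ((R + Bᵀ * (P * B))⁻¹ * X) = X :=
    fun X => Matrix.mul_nonsing_inv_cancel_left _ _ hU'
  nth_rewrite 1 [heq]
  simp only [Matrix.transpose_sub, Matrix.transpose_mul, Matrix.transpose_nonsing_inv,
    Matrix.transpose_transpose, Matrix.mul_assoc, hST, hRT, hPT, Matrix.mul_sub,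
    Matrix.sub_mul, c1, c2]
  simp only [Matrix.mul_add, Matrix.add_mul, Matrix.mul_sub, Matrix.sub_mul, Matrix.mul_assoc,
    c1, c2]
  abel

lemma qf_form {n p : ℕ} (N : Matrix (Fin p) (Fin n) ℝ) (Y : Matrix (Fin p) (Fin n) ℝ)
    (v : Fin n → ℂ) :
    star v ⬝ᵥ (mc (Nᵀ * Y) *ᵥ v) = star (mc N *ᵥ v) ⬝ᵥ (mc Y *ᵥ v) := by
  rw [mc_mul, ← Matrix.mulVec_mulVec, Matrix.dotProduct_mulVec, ← mc_conjTranspose,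
    ← Matrix.star_mulVec]

lemma stable_aux {n m : ℕ} [DecidableEq (Fin n)] [DecidableEq (Fin m)]
    {A : Matrix (Fin n) (Fin n) ℝ} {B : Matrix (Fin n) (Fin m) ℝ}
    {R : Matrix (Fin m) (Fin m) ℝ} {Q P : Matrix (Fin n) (Fin n) ℝ}
    {K : Matrix (Fin m) (Fin n) ℝ}
    (hR : R.PosDef) (hQ : Q.PosSemidef) (hP : P.PosSemidef)
    (hdet : Detectable A hQ.sqrt)
    (hkey : P = Q + Kᵀ * R * K + (A - B * K)ᵀ * P * (A - B * K)) :
    SchurStable (A - B * K) := by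
  intro μ hμ
  obtain ⟨v, hv0, hv⟩ := hμ
  by_contra hcon
  push_neg at hcon
  have hv' : mc (A - B * K) *ᵥ v = μ • v := hv
  set a : ℂ := star v ⬝ᵥ (mc P *ᵥ v) with ha_def
  set b : ℂ := star v ⬝ᵥ (mc Q *ᵥ v) with hb_def
  set w : Fin m → ℂ := mc K *ᵥ v with hw_def
  set c : ℂ := star w ⬝ᵥ (mc R *ᵥ w) with hc_def
  have ha : 0 ≤ a := (posSemidef_mc hP).dotProduct_mulVec_nonneg v
  have hb : 0 ≤ b := (posSemidef_mc hQ).dotProduct_mulVec_nonneg v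
  have hc : 0 ≤ c := (posSemidef_mc hR.posSemidef).dotProduct_mulVec_nonneg w
  -- main scalar identity
  have hmain : a = b + c + ((‖μ‖ ^ 2 : ℝ) : ℂ) * a := by
    have h1 : mc P = mc Q + mc (Kᵀ * (R * K)) + mc ((A - B * K)ᵀ * (P * (A - B * K))) := by
      rw [← mc_add, ← mc_add]
      refine congrArg mc ?_
      nth_rewrite 1 [hkey]
      simp only [Matrix.mul_assoc]
    have h2 : star v ⬝ᵥ (mc (Kᵀ * (R * K)) *ᵥ v) = c := by
      rw [qf_form, mc_mul, ← Matrix.mulVec_mulVec]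
    have h3 : star v ⬝ᵥ (mc ((A - B * K)ᵀ * (P * (A - B * K))) *ᵥ v)
        = ((‖μ‖ ^ 2 : ℝ) : ℂ) * a := by
      rw [qf_form, mc_mul, ← Matrix.mulVec_mulVec, hv', Matrix.mulVec_smul, star_smul,
        smul_dotProduct, dotProduct_smul, smul_eq_mul, smul_eq_mul, ← mul_assoc]
      congr 1
      rw [← starRingEnd_apply, mul_comm, Complex.mul_conj, Complex.normSq_eq_norm_sq]
    calc a = star v ⬝ᵥ (mc P *ᵥ v) := rfl
      _ = star v ⬝ᵥ (mc Q *ᵥ v) + star v ⬝ᵥ (mc (Kᵀ * (R * K)) *ᵥ v)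
            + star v ⬝ᵥ (mc ((A - B * K)ᵀ * (P * (A - B * K))) *ᵥ v) := by
          rw [h1, Matrix.add_mulVec, Matrix.add_mulVec, dotProduct_add,
            dotProduct_add]
      _ = b + c + ((‖μ‖ ^ 2 : ℝ) : ℂ) * a := by rw [h2, h3]
  have hs : (1 : ℝ) ≤ ‖μ‖ ^ 2 := by nlinarith [hcon, norm_nonneg μ]
  have h4 : 0 ≤ (((‖μ‖ ^ 2 - 1 : ℝ)) : ℂ) * a :=
    mul_nonneg (by rw [Complex.zero_le_real]; linarith) ha
  have hbc : b + c ≤ 0 := by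
    have h5 : b + c = -((((‖μ‖ ^ 2 - 1 : ℝ)) : ℂ) * a) := by
      push_cast at hmain ⊢
      linear_combination -hmain
    rw [h5]
    exact neg_nonpos_of_nonneg h4
  have hb0 : b = 0 := le_antisymm (le_trans (le_add_of_nonneg_right hc) hbc) hb
  have hc0 : c = 0 := le_antisymm (le_trans (le_add_of_nonneg_left hb) hbc) hc
  -- from c = 0 : K v = 0
  have hRw : mc R *ᵥ w = 0 := ((posSemidef_mc hR.posSemidef).dotProduct_mulVec_zero_iff w).mp hc0
  have hRunit : IsUnit (mc R) := by
    rw [Matrix.isUnit_iff_isUnit_det]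
    have hdet' : (mc R).det = ((R.det : ℝ) : ℂ) := (RingHom.map_det Complex.ofRealHom R).symm
    rw [hdet']
    exact isUnit_iff_ne_zero.mpr (by exact_mod_cast ne_of_gt hR.det_pos)
  have hw0 : w = 0 := by
    apply Matrix.mulVec_injective_iff_isUnit.mpr hRunit
    rw [hRw, Matrix.mulVec_zero]
  -- hence v is an eigenvector of A itself
  have hA : mc A *ᵥ v = μ • v := by
    have : mc (A - B * K) *ᵥ v = mc A *ᵥ v - mc B *ᵥ (mc K *ᵥ v) := by
      rw [mc_sub, mc_mul, Matrix.sub_mulVec, Matrix.mulVec_mulVec]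
    rw [this, ← hw_def, hw0, Matrix.mulVec_zero, sub_zero] at hv'
    exact hv'
  -- from b = 0 : sqrt Q v = 0, contradicting detectability
  have hQsqrt : hQ.sqrtᵀ * hQ.sqrt = Q := by
    rw [real_transpose_eq (psd_sqrt_isHermitian hQ), psd_sqrt_mul_self]
  have hu : star (mc hQ.sqrt *ᵥ v) ⬝ᵥ (mc hQ.sqrt *ᵥ v) = 0 := by
    rw [← qf_form, hQsqrt, ← hb_def, hb0]
  have hu0 : mc hQ.sqrt *ᵥ v = 0 := dotProduct_star_self_eq_zero.mp hu
  exact hdet μ v hv0 hA hcon hu0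

section Norms

attribute [local instance] Matrix.linftyOpNormedRing Matrix.linftyOpNormedAlgebra
  Matrix.linftyOpNormedAddCommGroup

noncomputable local instance {k : ℕ} : CompleteSpace (Matrix (Fin k) (Fin k) ℂ) :=
  FiniteDimensional.complete ℂ _

lemma mc_nnnorm {k : ℕ} (X : Matrix (Fin k) (Fin k) ℝ) : ‖mc X‖₊ = ‖X‖₊ := by
  rw [Matrix.linfty_opNNNorm_def, Matrix.linfty_opNNNorm_def]
  congr 1
  ext i
  congr 1
  ext j
  simp [mc, Matrix.map_apply]

/-- Schur stability implies the powers tend to zero in norm. -/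
lemma pow_norm_tendsto {k : ℕ} [DecidableEq (Fin k)] (G : Matrix (Fin k) (Fin k) ℝ)
    (hst : SchurStable G) :
    Filter.Tendsto (fun j : ℕ => ‖(G ^ j : Matrix (Fin k) (Fin k) ℝ)‖) Filter.atTop (nhds 0) := by
  set Mc : Matrix (Fin k) (Fin k) ℂ := mc G with hMc
  -- every point of the spectrum has norm < 1
  have hspec : ∀ μ ∈ spectrum ℂ Mc, ‖μ‖₊ < 1 := by
    intro μ hμ
    rw [spectrum.mem_iff] at hμ
    rw [Matrix.isUnit_iff_isUnit_det] at hμ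
    have hdet0 : (algebraMap ℂ (Matrix (Fin k) (Fin k) ℂ) μ - Mc).det = 0 := by
      by_contra hne
      exact hμ (isUnit_iff_ne_zero.mpr hne)
    obtain ⟨v, hv0, hv⟩ := (Matrix.exists_mulVec_eq_zero_iff).mpr hdet0
    have heig : Mc *ᵥ v = μ • v := by
      have h1 : (algebraMap ℂ (Matrix (Fin k) (Fin k) ℂ) μ - Mc) *ᵥ v
          = μ • v - Mc *ᵥ v := by
        rw [Matrix.sub_mulVec, Algebra.algebraMap_eq_smul_one, Matrix.smul_mulVec,
          Matrix.one_mulVec]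
      rw [h1] at hv
      exact (sub_eq_zero.mp hv).symm
    have := hst μ ⟨v, hv0, heig⟩
    exact_mod_cast this
  -- spectral radius < 1
  have hfin : (spectrum ℂ Mc).Finite := Matrix.finite_spectrum Mc
  have hrad : spectralRadius ℂ Mc < 1 := by
    have h1 : spectralRadius ℂ Mc ≤ hfin.toFinset.sup (fun z => (‖z‖₊ : ENNReal)) := by
      rw [spectralRadius]
      exact iSup₂_le fun z hz =>
        Finset.le_sup (f := fun z => (‖z‖₊ : ENNReal)) (hfin.mem_toFinset.mpr hz)
    refine lt_of_le_of_lt h1 ?_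
    rw [Finset.sup_lt_iff (by norm_num : (⊥ : ENNReal) < 1)]
    intro z hz
    exact_mod_cast hspec z (hfin.mem_toFinset.mp hz)
  -- Gelfand
  have hg := spectrum.pow_nnnorm_pow_one_div_tendsto_nhds_spectralRadius Mc
  obtain ⟨c, hc1, hc2⟩ := ENNReal.lt_iff_exists_nnreal_btwn.mp hrad
  have hc2' : (c : ℝ) < 1 := by exact_mod_cast hc2
  have hev : ∀ᶠ j : ℕ in Filter.atTop,
      ((‖Mc ^ j‖₊ : ENNReal) ^ (1 / (j : ℝ))) < (c : ENNReal) :=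
    hg.eventually_lt_const hc1
  have hev2 : ∀ᶠ j : ℕ in Filter.atTop, ‖(G ^ j : Matrix (Fin k) (Fin k) ℝ)‖ ≤ (c : ℝ) ^ j := by
    filter_upwards [hev, Filter.eventually_ge_atTop 1] with j hj hj1
    have hj0 : (j : ℝ) ≠ 0 := by positivity
    have h2 : ((‖Mc ^ j‖₊ : ENNReal) ^ (1 / (j : ℝ))) ^ (j : ℝ)
        ≤ (c : ENNReal) ^ (j : ℝ) := ENNReal.rpow_le_rpow hj.le (by positivity)
    rw [← ENNReal.rpow_mul, one_div, inv_mul_cancel₀ hj0, ENNReal.rpow_one,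
      ENNReal.rpow_natCast] at h2
    have h3 : ‖Mc ^ j‖₊ ≤ c ^ j := by
      rw [← ENNReal.coe_pow] at h2
      exact_mod_cast h2
    have h4 : ‖(G ^ j : Matrix (Fin k) (Fin k) ℝ)‖₊ ≤ c ^ j := by
      rw [← mc_nnnorm, mc_pow]
      exact h3
    calc ‖(G ^ j : Matrix (Fin k) (Fin k) ℝ)‖ ≤ ((c ^ j : NNReal) : ℝ) := h4
      _ = (c : ℝ) ^ j := by push_cast; ring
  refine squeeze_zero_norm' ?_ (tendsto_pow_atTop_nhds_zero_of_lt_one c.coe_nonneg hc2')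
  filter_upwards [hev2] with j hj
  rwa [Real.norm_eq_abs, abs_of_nonneg (norm_nonneg _)]

/-- discrete Lyapunov argument -/
lemma lyap {k : ℕ} [DecidableEq (Fin k)] (G Δ M : Matrix (Fin k) (Fin k) ℝ)
    (hsym : Δ.IsHermitian) (hM : M.PosSemidef)
    (hid : Δ = Gᵀ * Δ * G + M) (hst : SchurStable G) : Δ.PosSemidef := by
  refine Matrix.PosSemidef.of_dotProduct_mulVec_nonneg hsym fun x => ?_
  rw [star_trivial]
  set f : ℕ → ℝ := fun j => (G ^ j *ᵥ x) ⬝ᵥ (Δ *ᵥ (G ^ j *ᵥ x)) with hf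
  have hstep : ∀ y : Fin k → ℝ, (G *ᵥ y) ⬝ᵥ (Δ *ᵥ (G *ᵥ y)) ≤ y ⬝ᵥ (Δ *ᵥ y) := by
    intro y
    have h1 : y ⬝ᵥ (Δ *ᵥ y) = (G *ᵥ y) ⬝ᵥ (Δ *ᵥ (G *ᵥ y)) + y ⬝ᵥ (M *ᵥ y) := by
      nth_rewrite 1 [hid]
      rw [Matrix.add_mulVec, dotProduct_add]
      congr 1
      rw [Matrix.mul_assoc, ← Matrix.mulVec_mulVec, Matrix.dotProduct_mulVec,
        Matrix.vecMul_transpose, ← Matrix.mulVec_mulVec]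
    have h2 : 0 ≤ y ⬝ᵥ (M *ᵥ y) := by
      have := hM.dotProduct_mulVec_nonneg y
      rwa [star_trivial] at this
    linarith
  have hmono : ∀ j : ℕ, f j ≤ f 0 := by
    intro j
    induction j with
    | zero => exact le_rfl
    | succ j ih =>
      refine le_trans ?_ ih
      show f (j + 1) ≤ f j
      have : G ^ (j + 1) *ᵥ x = G *ᵥ (G ^ j *ᵥ x) := by
        rw [pow_succ', Matrix.mulVec_mulVec]
      simp only [hf, this]
      exact hstep _
  -- |f j| ≤ C * (‖G^j‖*‖G^j‖)
  have hdot : ∀ (v w : Fin k → ℝ), |v ⬝ᵥ w| ≤ (k : ℝ) * (‖v‖ * ‖w‖) := by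
    intro v w
    calc |∑ i, v i * w i| ≤ ∑ i, |v i * w i| := Finset.abs_sum_le_sum_abs _ _
      _ ≤ ∑ _i : Fin k, ‖v‖ * ‖w‖ := by
          refine Finset.sum_le_sum fun i _ => ?_
          rw [abs_mul]
          exact mul_le_mul (norm_le_pi_norm v i) (norm_le_pi_norm w i) (abs_nonneg _)
            (norm_nonneg _)
      _ = (k : ℝ) * (‖v‖ * ‖w‖) := by simp [Finset.sum_const, Finset.card_univ, mul_comm]
  have hbound : ∀ j : ℕ, ‖f j‖ ≤ ((k : ℝ) * ‖x‖ * ‖Δ‖ * ‖x‖) * (‖(G ^ j : Matrix (Fin k) (Fin k) ℝ)‖ * ‖(G ^ j : Matrix (Fin k) (Fin k) ℝ)‖) := by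
    intro j
    set y : Fin k → ℝ := G ^ j *ᵥ x with hy
    have h1 : ‖y‖ ≤ ‖(G ^ j : Matrix (Fin k) (Fin k) ℝ)‖ * ‖x‖ :=
      Matrix.linfty_opNorm_mulVec _ _
    have h2 : ‖Δ *ᵥ y‖ ≤ ‖Δ‖ * ‖y‖ := Matrix.linfty_opNorm_mulVec _ _
    have h3 := hdot y (Δ *ᵥ y)
    rw [Real.norm_eq_abs]
    have hk : (0:ℝ) ≤ (k : ℝ) := Nat.cast_nonneg _
    have h4 : ‖Δ *ᵥ y‖ ≤ ‖Δ‖ * (‖(G ^ j : Matrix (Fin k) (Fin k) ℝ)‖ * ‖x‖) :=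
      h2.trans (mul_le_mul_of_nonneg_left h1 (norm_nonneg Δ))
    calc |f j| ≤ (k : ℝ) * (‖y‖ * ‖Δ *ᵥ y‖) := h3
      _ ≤ (k : ℝ) * ((‖(G ^ j : Matrix (Fin k) (Fin k) ℝ)‖ * ‖x‖)
            * (‖Δ‖ * (‖(G ^ j : Matrix (Fin k) (Fin k) ℝ)‖ * ‖x‖))) := by
          refine mul_le_mul_of_nonneg_left ?_ hk
          exact mul_le_mul h1 h4 (norm_nonneg _) (by positivity)
      _ = ((k : ℝ) * ‖x‖ * ‖Δ‖ * ‖x‖) * (‖(G ^ j : Matrix (Fin k) (Fin k) ℝ)‖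
            * ‖(G ^ j : Matrix (Fin k) (Fin k) ℝ)‖) := by ring
  have htend : Filter.Tendsto f Filter.atTop (nhds 0) := by
    have h1 := (pow_norm_tendsto G hst).mul (pow_norm_tendsto G hst)
    rw [mul_zero] at h1
    have h2 := h1.const_mul ((k : ℝ) * ‖x‖ * ‖Δ‖ * ‖x‖)
    rw [mul_zero] at h2
    exact squeeze_zero_norm hbound h2
  have hfinal : 0 ≤ f 0 := le_of_tendsto htend (Filter.Eventually.of_forall hmono)
  have hf0 : f 0 = x ⬝ᵥ Δ *ᵥ x := by simp [hf]
  rw [hf0] at hfinal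
  exact hfinal

end Norms

end RicAux

theorem stmt17 {n m : ℕ} [DecidableEq (Fin n)] (A : Matrix (Fin n) (Fin n) ℝ)
    (B : Matrix (Fin n) (Fin m) ℝ) (R : Matrix (Fin m) (Fin m) ℝ)
    (Q₁ Q₂ P₁ P₂ : Matrix (Fin n) (Fin n) ℝ)
    (hR : R.PosDef) (hQ1 : Q₁.PosSemidef) (hQ2 : Q₂.PosSemidef)
    (hQ12 : (Q₂ - Q₁).PosSemidef)
    (hdet1 : Detectable A hQ1.sqrt) (hdet2 : Detectable A hQ2.sqrt)
    (hstab : Stabilizable A B)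
    (hP1 : P₁.PosSemidef) (hP2 : P₂.PosSemidef)
    (heq1 : P₁ = Q₁ + Aᵀ * P₁ * A - Aᵀ * P₁ * B * (R + Bᵀ * P₁ * B)⁻¹ * Bᵀ * P₁ * A)
    (heq2 : P₂ = Q₂ + Aᵀ * P₂ * A - Aᵀ * P₂ * B * (R + Bᵀ * P₂ * B)⁻¹ * Bᵀ * P₂ * A) :
    (P₂ - P₁).PosSemidef := by
  have hRT : Rᵀ = R := RicAux.real_transpose_eq hR.1
  have hP1T : P₁ᵀ = P₁ := RicAux.real_transpose_eq hP1.1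
  have hP2T : P₂ᵀ = P₂ := RicAux.real_transpose_eq hP2.1
  have hBPB1 : (Bᵀ * P₁ * B).PosSemidef := by
    have := hP1.conjTranspose_mul_mul_same B
    rwa [RicAux.real_conjTranspose_eq_transpose] at this
  have hBPB2 : (Bᵀ * P₂ * B).PosSemidef := by
    have := hP2.conjTranspose_mul_mul_same B
    rwa [RicAux.real_conjTranspose_eq_transpose] at this
  have hS1 : (R + Bᵀ * P₁ * B).PosDef := hR.add_posSemidef hBPB1
  have hS2 : (R + Bᵀ * P₂ * B).PosDef := hR.add_posSemidef hBPB2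
  have hU1 : IsUnit (R + Bᵀ * P₁ * B).det := hS1.det_pos.ne'.isUnit
  have hU2 : IsUnit (R + Bᵀ * P₂ * B).det := hS2.det_pos.ne'.isUnit
  set K₂ : Matrix (Fin m) (Fin n) ℝ := (R + Bᵀ * P₂ * B)⁻¹ * (Bᵀ * P₂ * A) with hK2
  set K₁ : Matrix (Fin m) (Fin n) ℝ := (R + Bᵀ * P₁ * B)⁻¹ * (Bᵀ * P₁ * A) with hK1
  have key2 := RicAux.key' A B R P₂ Q₂ hRT hP2T hU2 heq2 K₂
  rw [← hK2, sub_self, Matrix.transpose_zero, Matrix.zero_mul, Matrix.zero_mul,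
    sub_zero] at key2
  have key1 := RicAux.key' A B R P₁ Q₁ hRT hP1T hU1 heq1 K₂
  rw [← hK1] at key1
  have hstable : SchurStable (A - B * K₂) := RicAux.stable_aux hR hQ2 hP2 hdet2 key2
  have hΔ : P₂ - P₁ = (A - B * K₂)ᵀ * (P₂ - P₁) * (A - B * K₂)
      + ((Q₂ - Q₁) + (K₂ - K₁)ᵀ * (R + Bᵀ * P₁ * B) * (K₂ - K₁)) := by
    calc P₂ - P₁
        = (Q₂ + K₂ᵀ * R * K₂ + (A - B * K₂)ᵀ * P₂ * (A - B * K₂))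
          - (Q₁ + K₂ᵀ * R * K₂ + (A - B * K₂)ᵀ * P₁ * (A - B * K₂)
            - (K₂ - K₁)ᵀ * (R + Bᵀ * P₁ * B) * (K₂ - K₁)) := by
          rw [← key2, ← key1]
      _ = (A - B * K₂)ᵀ * (P₂ - P₁) * (A - B * K₂)
          + ((Q₂ - Q₁) + (K₂ - K₁)ᵀ * (R + Bᵀ * P₁ * B) * (K₂ - K₁)) := by
          have hexp : ∀ G' : Matrix (Fin n) (Fin n) ℝ,
              G'ᵀ * (P₂ - P₁) * G' = G'ᵀ * P₂ * G' - G'ᵀ * P₁ * G' := fun G' => by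
            rw [Matrix.mul_sub, Matrix.sub_mul]
          rw [hexp]
          abel
  have hDpsd : ((K₂ - K₁)ᵀ * (R + Bᵀ * P₁ * B) * (K₂ - K₁)).PosSemidef := by
    have := hS1.posSemidef.conjTranspose_mul_mul_same (K₂ - K₁)
    rwa [RicAux.real_conjTranspose_eq_transpose] at this
  exact RicAux.lyap (A - B * K₂) (P₂ - P₁) _ (hP2.1.sub hP1.1) (hQ12.add hDpsd) hΔ hstable
end
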